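/- arXiv:1905.04039 — 5 statements merged into one kernel-verified Lean document; each statement's English description precedes it below -/
import Mathlib

section
/- (Theorem 1, Bayes-optimal classifier for the F_b-score.) For every b > 0, the classifier g*(x) = 1{η(x) > θ*} maximizes the F_b-score over all measurable classifiers g : ℝ^d → {0,1}, where θ* ∈ [0,1] is the unique solution of b² θ P(Y=1) = E[(η(X) − θ)_+]. Moreover, F_b(g*) = θ*. -/
/-!
STATEMENT 4 (Theorem 1, Bayes-optimal classifier for the F_b-score):
For every b > 0, the classifier g*(x) = 1{η(x) > θ*} maximizes the F_b-score over
all measurable classifiers, where θ* ∈ [0,1] is the unique solution of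
b² θ P(Y=1) = E[(η(X) − θ)_+].  Moreover F_b(g*) = θ*.

Encoding: the joint distribution of (X,Y) is given by the marginal μ = P_X and
the regression function η : ℝ^d → [0,1]; then P(Y=1) = ∫ η dμ,
P(Y=1, g(X)=1) = ∫_{g=1} η dμ, P(g(X)=1) = μ{g=1}, and
F_b(g) = (∫_{g=1} η dμ) / (b² ∫ η dμ + μ{g=1}).
-/

open MeasureTheory Set

/-- The (normalized) F_b-score of a classifier `g`. -/
noncomputable def Fscore {d : ℕ} (μ : Measure (EuclideanSpace ℝ (Fin d)))
    (η : EuclideanSpace ℝ (Fin d) → ℝ) (b : ℝ)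
    (g : EuclideanSpace ℝ (Fin d) → Bool) : ℝ :=
  (∫ x in {x | g x = true}, η x ∂μ) /
    (b ^ 2 * (∫ x, η x ∂μ) + (μ {x | g x = true}).toReal)

theorem statement4 (d : ℕ) (μ : Measure (EuclideanSpace ℝ (Fin d)))
    [IsProbabilityMeasure μ] (η : EuclideanSpace ℝ (Fin d) → ℝ)
    (hη : Measurable η) (hη01 : ∀ x, η x ∈ Icc (0 : ℝ) 1)
    (hpos : 0 < ∫ x, η x ∂μ) (b : ℝ) (hb : 0 < b)
    (θstar : ℝ) (hθmem : θstar ∈ Icc (0 : ℝ) 1)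
    (hθeq : b ^ 2 * θstar * ∫ x, η x ∂μ = ∫ x, max (η x - θstar) 0 ∂μ) :
    (∀ g : EuclideanSpace ℝ (Fin d) → Bool, Measurable g →
        Fscore μ η b g ≤ Fscore μ η b (fun x => decide (θstar < η x)))
      ∧ Fscore μ η b (fun x => decide (θstar < η x)) = θstar := by
  obtain ⟨hθ0, hθ1⟩ := hθmem
  have hint : Integrable η μ := by
    apply Integrable.mono' (integrable_const (1 : ℝ)) hη.aestronglyMeasurable
    filter_upwards with x
    rw [Real.norm_eq_abs, abs_le]
    exact ⟨by linarith [(hη01 x).1], (hη01 x).2⟩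
  have hintm : Integrable (fun x => max (η x - θstar) 0) μ := by
    apply Integrable.mono' (integrable_const (1 : ℝ))
      ((hη.sub measurable_const).max measurable_const).aestronglyMeasurable
    filter_upwards with x
    rw [Real.norm_eq_abs, abs_le]
    constructor
    · have := le_max_right (η x - θstar) 0; simp only [Pi.sub_apply]; linarith
    · have h1 : η x - θstar ≤ 1 := by linarith [(hη01 x).2]
      exact max_le h1 (by norm_num)
  set Sstar : Set (EuclideanSpace ℝ (Fin d)) := {x | θstar < η x} with hS
  have hSstar_meas : MeasurableSet Sstar := measurableSet_lt measurable_const hη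
  have hmax_eq : (fun x => max (η x - θstar) 0)
      = Sstar.indicator (fun x => η x - θstar) := by
    funext x
    by_cases h : θstar < η x
    · rw [Set.indicator_apply, if_pos (show x ∈ Sstar from h)]
      exact max_eq_left (by linarith)
    · rw [Set.indicator_apply, if_neg (show x ∉ Sstar from h)]
      exact max_eq_right (by push_neg at h; linarith)
  have hT : ∫ x, max (η x - θstar) 0 ∂μ = ∫ x in Sstar, (η x - θstar) ∂μ := by
    rw [hmax_eq, integral_indicator hSstar_meas]
  have hsub : ∀ S : Set (EuclideanSpace ℝ (Fin d)), MeasurableSet S →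
      ∫ x in S, (η x - θstar) ∂μ = (∫ x in S, η x ∂μ) - θstar * (μ S).toReal := by
    intro S hSm
    rw [integral_sub hint.integrableOn (integrableOn_const (measure_lt_top μ S).ne)]
    rw [setIntegral_const, smul_eq_mul, measureReal_def]
    ring
  have key : ∀ S : Set (EuclideanSpace ℝ (Fin d)), MeasurableSet S →
      ∫ x in S, η x ∂μ ≤ θstar * (b ^ 2 * (∫ x, η x ∂μ) + (μ S).toReal) := by
    intro S hSm
    have h1 : ∫ x in S, (η x - θstar) ∂μ ≤ ∫ x, max (η x - θstar) 0 ∂μ := by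
      calc ∫ x in S, (η x - θstar) ∂μ
          ≤ ∫ x in S, max (η x - θstar) 0 ∂μ := by
            apply setIntegral_mono_on
              (hint.integrableOn.sub (integrableOn_const (measure_lt_top μ S).ne))
              hintm.integrableOn hSm
            intro x _; exact le_max_left _ _
        _ ≤ ∫ x, max (η x - θstar) 0 ∂μ :=
            setIntegral_le_integral hintm (ae_of_all _ fun x => le_max_right _ _)
    rw [hsub S hSm] at h1
    nlinarith [h1, hθeq]
  have hden_pos : ∀ S : Set (EuclideanSpace ℝ (Fin d)),
      0 < b ^ 2 * (∫ x, η x ∂μ) + (μ S).toReal := by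
    intro S
    have h0 : 0 ≤ (μ S).toReal := ENNReal.toReal_nonneg
    have hb2 : 0 < b ^ 2 := pow_pos hb 2
    nlinarith
  have hset_eq : {x | (fun x => decide (θstar < η x)) x = true} = Sstar := by
    ext x; simp [hS]
  have hFstar : Fscore μ η b (fun x => decide (θstar < η x)) = θstar := by
    rw [Fscore, hset_eq]
    rw [div_eq_iff (ne_of_gt (hden_pos Sstar))]
    have h2 := hsub Sstar hSstar_meas
    rw [hT] at hθeq
    nlinarith [h2, hθeq]
  refine ⟨fun g hg => ?_, hFstar⟩
  rw [hFstar, Fscore]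
  have hSm : MeasurableSet {x | g x = true} := hg (measurableSet_singleton true)
  rw [div_le_iff₀ (hden_pos _)]
  have := key _ hSm
  linarith
end

section
/- (Lemma 1, excess F-score formula.) For every b > 0 and every measurable classifier g : ℝ^d → {0,1}, the excess score 𝓔_b(g) = F_b(g*) − F_b(g) satisfies 𝓔_b(g) = E[|η(X) − θ*| · 1{g*(X) ≠ g(X)}] / (b² P(Y=1) + P(g(X)=1)), where g*(x) = 1{η(x) > θ*}. -/
/-!
STATEMENT 5 (Lemma 1, excess F-score formula): for every b > 0 and every
measurable classifier g,
  F_b(g*) − F_b(g) = E[|η(X) − θ*| 1{g*(X) ≠ g(X)}] / (b² P(Y=1) + P(g(X)=1)),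
where g*(x) = 1{η(x) > θ*} and θ* ∈ [0,1] is the unique solution of
b² θ P(Y=1) = E[(η(X) − θ)_+].

Encoding: the joint distribution of (X,Y) is given by the marginal μ = P_X and
the regression function η : ℝ^d → [0,1]; F_b(g) = (∫_{g=1} η dμ)/(b² ∫ η dμ + μ{g=1}).
-/

open MeasureTheory Set

theorem statement5 (d : ℕ) (μ : Measure (EuclideanSpace ℝ (Fin d)))
    [IsProbabilityMeasure μ] (η : EuclideanSpace ℝ (Fin d) → ℝ)
    (hη : Measurable η) (hη01 : ∀ x, η x ∈ Icc (0 : ℝ) 1)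
    (hpos : 0 < ∫ x, η x ∂μ) (b : ℝ) (hb : 0 < b)
    (θstar : ℝ) (hθmem : θstar ∈ Icc (0 : ℝ) 1)
    (hθeq : b ^ 2 * θstar * ∫ x, η x ∂μ = ∫ x, max (η x - θstar) 0 ∂μ)
    (g : EuclideanSpace ℝ (Fin d) → Bool) (hg : Measurable g) :
    Fscore μ η b (fun x => decide (θstar < η x)) - Fscore μ η b g =
      (∫ x in {x | decide (θstar < η x) ≠ g x}, |η x - θstar| ∂μ) /
        (b ^ 2 * (∫ x, η x ∂μ) + (μ {x | g x = true}).toReal) := by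
  set S := ∫ x, η x ∂μ with hSdef
  set A : Set (EuclideanSpace ℝ (Fin d)) := {x | θstar < η x} with hAdef
  set B : Set (EuclideanSpace ℝ (Fin d)) := {x | g x = true} with hBdef
  have hA : MeasurableSet A := measurableSet_lt measurable_const hη
  have hB : MeasurableSet B := hg (measurableSet_singleton true)
  have hInt : Integrable η μ := by
    refine Integrable.mono' (integrable_const 1) hη.aestronglyMeasurable ?_
    filter_upwards with x
    rw [Real.norm_eq_abs, abs_of_nonneg (hη01 x).1]; exact (hη01 x).2
  have hIntf : Integrable (fun x => η x - θstar) μ := hInt.sub (integrable_const _)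
  have hb2S : 0 < b ^ 2 * S := by positivity
  have hDB : 0 < b ^ 2 * S + (μ B).toReal := by
    have := ENNReal.toReal_nonneg (a := μ B); linarith
  have hDA : 0 < b ^ 2 * S + (μ A).toReal := by
    have := ENNReal.toReal_nonneg (a := μ A); linarith
  -- ∫ max = ∫_A f
  have h1 : ∫ x, max (η x - θstar) 0 ∂μ = ∫ x in A, (η x - θstar) ∂μ := by
    rw [← integral_indicator hA]
    congr 1; ext x
    by_cases hx : x ∈ A
    · rw [Set.indicator_of_mem hx, max_eq_left (by simp only [hAdef, mem_setOf_eq] at hx; linarith)]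
    · rw [Set.indicator_of_notMem hx, max_eq_right (by simp only [hAdef, mem_setOf_eq, not_lt] at hx; linarith)]
  have hsub : ∀ C : Set (EuclideanSpace ℝ (Fin d)), MeasurableSet C →
      ∫ x in C, (η x - θstar) ∂μ = (∫ x in C, η x ∂μ) - θstar * (μ C).toReal := by
    intro C hC
    rw [integral_sub hInt.integrableOn (integrableOn_const (measure_lt_top μ C).ne),
      setIntegral_const, smul_eq_mul, mul_comm, measureReal_def]
  have hAf : ∫ x in A, (η x - θstar) ∂μ = b ^ 2 * θstar * S := by rw [← h1, ← hθeq]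
  have hkey : ∫ x in A, η x ∂μ = θstar * (b ^ 2 * S + (μ A).toReal) := by
    have := hsub A hA; rw [hAf] at this; linarith [this]
  have hFgs : Fscore μ η b (fun x => decide (θstar < η x)) = θstar := by
    unfold Fscore
    have hset : {x | (fun x => decide (θstar < η x)) x = true} = A := by
      ext x; simp [hAdef]
    rw [hset, hkey, ← hSdef, mul_div_cancel_right₀ _ hDA.ne']
  -- symmetric difference
  have hΔ : {x | decide (θstar < η x) ≠ g x} = (A \ B) ∪ (B \ A) := by
    ext x
    cases hgx : g x <;> by_cases hax : θstar < η x <;>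
      simp [hAdef, hBdef, hgx, hax]
  have hdAB : MeasurableSet (A \ B) := hA.diff hB
  have hdBA : MeasurableSet (B \ A) := hB.diff hA
  have habs : ∫ x in {x | decide (θstar < η x) ≠ g x}, |η x - θstar| ∂μ
      = (∫ x in A \ B, (η x - θstar) ∂μ) - ∫ x in B \ A, (η x - θstar) ∂μ := by
    rw [hΔ, setIntegral_union disjoint_sdiff_sdiff hdBA hIntf.abs.integrableOn
      hIntf.abs.integrableOn]
    have e1 : ∫ x in A \ B, |η x - θstar| ∂μ = ∫ x in A \ B, (η x - θstar) ∂μ := by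
      refine setIntegral_congr_fun hdAB (fun x hx => ?_)
      have : θstar < η x := hx.1
      rw [abs_of_nonneg (by linarith)]
    have e2 : ∫ x in B \ A, |η x - θstar| ∂μ = ∫ x in B \ A, -(η x - θstar) ∂μ := by
      refine setIntegral_congr_fun hdBA (fun x hx => ?_)
      have : ¬ θstar < η x := hx.2
      rw [abs_of_nonpos (by simp only [not_lt] at this; linarith)]
    rw [e1, e2, integral_neg]; ring
  have hAsplit : ∫ x in A, (η x - θstar) ∂μ
      = (∫ x in A \ B, (η x - θstar) ∂μ) + ∫ x in A ∩ B, (η x - θstar) ∂μ := by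
    rw [← setIntegral_union disjoint_sdiff_inter (hA.inter hB) hIntf.integrableOn
      hIntf.integrableOn, Set.diff_union_inter]
  have hBsplit : ∫ x in B, (η x - θstar) ∂μ
      = (∫ x in B \ A, (η x - θstar) ∂μ) + ∫ x in A ∩ B, (η x - θstar) ∂μ := by
    rw [Set.inter_comm, ← setIntegral_union disjoint_sdiff_inter (hB.inter hA)
      hIntf.integrableOn hIntf.integrableOn, Set.diff_union_inter]
  have hNum : θstar * (b ^ 2 * S + (μ B).toReal) - (∫ x in B, η x ∂μ)
      = ∫ x in {x | decide (θstar < η x) ≠ g x}, |η x - θstar| ∂μ := by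
    rw [habs]
    have h3 := hsub B hB
    have h4 := hsub A hA
    nlinarith [hAsplit, hBsplit, hAf]
  rw [hFgs]
  unfold Fscore
  rw [← hBdef, ← hSdef, ← hNum]
  field_simp
end

section
/- (Lemma 2, difference of thresholds, general form.) Let μ and ν be probability measures on a measurable space 𝒳 and let p, q : 𝒳 → [0,1] be measurable functions with ∫ p dμ > 0 and ∫ q dν > 0. Suppose θ ∈ [0,1] satisfies θ ∫ p dμ = ∫ (p − θ)_+ dμ and θ' ∈ [0,1] satisfies θ' ∫ q dν = ∫ (q − θ')_+ dν. Then |θ − θ'| · ∫ p dμ ≤ ∫_0^1 |μ({x : p(x) > t}) − ν({x : q(x) > t})| dt. -/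
/-!
STATEMENT 6 (Lemma 2, difference of thresholds, general form):
for probability measures μ, ν and measurable p, q : 𝒳 → [0,1] with ∫ p dμ > 0 and
∫ q dν > 0, if θ ∈ [0,1] solves θ ∫ p dμ = ∫ (p − θ)_+ dμ and θ' ∈ [0,1] solves
θ' ∫ q dν = ∫ (q − θ')_+ dν, then
|θ − θ'| ∫ p dμ ≤ ∫_0^1 |μ(p > t) − ν(q > t)| dt.
-/

open MeasureTheory Set

private lemma layercake_aux {𝒳 : Type*} [MeasurableSpace 𝒳] (μ : Measure 𝒳)
    [IsProbabilityMeasure μ] (p : 𝒳 → ℝ) (hp : Measurable p)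
    (hp01 : ∀ x, p x ∈ Icc (0 : ℝ) 1) (θ : ℝ) (hθ0 : 0 ≤ θ) (hθ1 : θ ≤ 1) :
    ∫ x, max (p x - θ) 0 ∂μ = ∫ t in θ..1, (μ {x | t < p x}).toReal := by
  have hfm : Measurable fun x => max (p x - θ) 0 := (hp.sub_const θ).max measurable_const
  have hfi : Integrable (fun x => max (p x - θ) 0) μ := by
    refine (integrable_const (1 : ℝ)).mono' hfm.aestronglyMeasurable ?_
    filter_upwards with x
    rw [Real.norm_eq_abs, abs_of_nonneg (le_max_right _ _)]
    exact max_le (by linarith [(hp01 x).2]) (by norm_num)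
  rw [hfi.integral_eq_integral_meas_lt (Filter.Eventually.of_forall fun x => le_max_right _ _)]
  have h1 : ∫ t in Ioi (0 : ℝ), (μ {x | t < max (p x - θ) 0}).toReal
      = ∫ t in Ioi (0 : ℝ), (μ {x | θ + t < p x}).toReal := by
    refine setIntegral_congr_fun measurableSet_Ioi fun t ht => ?_
    have hset : {x | t < max (p x - θ) 0} = {x | θ + t < p x} := by
      ext x
      simp only [mem_setOf_eq, lt_max_iff]
      constructor
      · rintro (h | h)
        · linarith
        · exact absurd h (not_lt.2 (le_of_lt ht))
      · intro h; left; linarith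
    rw [hset]
  simp only [measureReal_def]
  rw [h1]
  have h2 : ∫ t in Ioi (0 : ℝ), (μ {x | θ + t < p x}).toReal
      = ∫ t in Ioc (0 : ℝ) (1 - θ), (μ {x | θ + t < p x}).toReal := by
    refine setIntegral_eq_of_subset_of_ae_diff_eq_zero nullMeasurableSet_Ioi
      Ioc_subset_Ioi_self ?_
    refine Filter.Eventually.of_forall fun t ht => ?_
    have h1t : 1 - θ < t := by
      rcases ht with ⟨ht1, ht2⟩
      simp only [mem_Ioc, not_and, not_le] at ht2
      exact ht2 ht1
    have : {x | θ + t < p x} = (∅ : Set 𝒳) := by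
      ext x; simp only [mem_setOf_eq, mem_empty_iff_false, iff_false, not_lt]
      linarith [(hp01 x).2]
    simp [this]
  rw [h2, ← intervalIntegral.integral_of_le (by linarith)]
  have h3 := intervalIntegral.integral_comp_add_left
    (a := (0:ℝ)) (b := 1 - θ) (fun t => (μ {x | t < p x}).toReal) θ
  rw [h3]
  norm_num

theorem statement6 {𝒳 : Type*} [MeasurableSpace 𝒳] (μ ν : Measure 𝒳)
    [IsProbabilityMeasure μ] [IsProbabilityMeasure ν]
    (p q : 𝒳 → ℝ) (hp : Measurable p) (hq : Measurable q)
    (hp01 : ∀ x, p x ∈ Icc (0 : ℝ) 1) (hq01 : ∀ x, q x ∈ Icc (0 : ℝ) 1)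
    (hppos : 0 < ∫ x, p x ∂μ) (hqpos : 0 < ∫ x, q x ∂ν)
    (θ θ' : ℝ) (hθ : θ ∈ Icc (0 : ℝ) 1) (hθ' : θ' ∈ Icc (0 : ℝ) 1)
    (heq : θ * ∫ x, p x ∂μ = ∫ x, max (p x - θ) 0 ∂μ)
    (heq' : θ' * ∫ x, q x ∂ν = ∫ x, max (q x - θ') 0 ∂ν) :
    |θ - θ'| * ∫ x, p x ∂μ ≤
      ∫ t in (0 : ℝ)..1, |(μ {x | t < p x}).toReal - (ν {x | t < q x}).toReal| := by
  obtain ⟨hθ0, hθ1⟩ := hθ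
  obtain ⟨hθ'0, hθ'1⟩ := hθ'
  set g : ℝ → ℝ := fun t => (μ {x | t < p x}).toReal with hg_def
  set h : ℝ → ℝ := fun t => (ν {x | t < q x}).toReal with hh_def
  have hg_anti : Antitone g := fun s t hst =>
    ENNReal.toReal_mono (measure_ne_top μ _)
      (measure_mono fun x hx => lt_of_le_of_lt hst hx)
  have hh_anti : Antitone h := fun s t hst =>
    ENNReal.toReal_mono (measure_ne_top ν _)
      (measure_mono fun x hx => lt_of_le_of_lt hst hx)
  have hg_int : ∀ a b : ℝ, IntervalIntegrable g volume a b := fun a b =>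
    hg_anti.intervalIntegrable
  have hh_int : ∀ a b : ℝ, IntervalIntegrable h volume a b := fun a b =>
    hh_anti.intervalIntegrable
  have hΔ_int : ∀ a b : ℝ, IntervalIntegrable (fun t => |g t - h t|) volume a b := fun a b =>
    ((hg_int a b).sub (hh_int a b)).abs
  set I := ∫ x, p x ∂μ with hI_def
  set J := ∫ x, q x ∂ν with hJ_def
  -- layer cake identities
  have hI : I = ∫ t in (0:ℝ)..1, g t := by
    rw [hI_def, show (∫ x, p x ∂μ) = ∫ x, max (p x - 0) 0 ∂μ from integral_congr_ae
      (Filter.Eventually.of_forall fun x => by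
        simp [max_eq_left (hp01 x).1])]
    exact layercake_aux μ p hp hp01 0 le_rfl (by norm_num)
  have hJ : J = ∫ t in (0:ℝ)..1, h t := by
    rw [hJ_def, show (∫ x, q x ∂ν) = ∫ x, max (q x - 0) 0 ∂ν from integral_congr_ae
      (Filter.Eventually.of_forall fun x => by
        simp [max_eq_left (hq01 x).1])]
    exact layercake_aux ν q hq hq01 0 le_rfl (by norm_num)
  have hθI : θ * I = ∫ t in θ..1, g t := by
    rw [hI_def, heq]; exact layercake_aux μ p hp hp01 θ hθ0 hθ1
  have hθ'J : θ' * J = ∫ t in θ'..1, h t := by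
    rw [hJ_def, heq']; exact layercake_aux ν q hq hq01 θ' hθ'0 hθ'1
  -- splitting integrals at θ'
  have hsplit_g : (∫ t in (0:ℝ)..θ', g t) + ∫ t in θ'..1, g t = ∫ t in (0:ℝ)..1, g t :=
    intervalIntegral.integral_add_adjacent_intervals (hg_int 0 θ') (hg_int θ' 1)
  have hsplit_h : (∫ t in (0:ℝ)..θ', h t) + ∫ t in θ'..1, h t = ∫ t in (0:ℝ)..1, h t :=
    intervalIntegral.integral_add_adjacent_intervals (hh_int 0 θ') (hh_int θ' 1)
  have hsplit_abs : (∫ t in (0:ℝ)..θ', |g t - h t|) + ∫ t in θ'..1, |g t - h t|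
      = ∫ t in (0:ℝ)..1, |g t - h t| :=
    intervalIntegral.integral_add_adjacent_intervals (hΔ_int 0 θ') (hΔ_int θ' 1)
  set E1 := ∫ t in (0:ℝ)..θ', (g t - h t) with hE1
  set E2 := ∫ t in θ'..1, (g t - h t) with hE2
  set A1 := ∫ t in (0:ℝ)..θ', |g t - h t| with hA1
  set A2 := ∫ t in θ'..1, |g t - h t| with hA2
  have hE1' : E1 = (∫ t in (0:ℝ)..θ', g t) - ∫ t in (0:ℝ)..θ', h t :=
    intervalIntegral.integral_sub (hg_int 0 θ') (hh_int 0 θ')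
  have hE2' : E2 = (∫ t in θ'..1, g t) - ∫ t in θ'..1, h t :=
    intervalIntegral.integral_sub (hg_int θ' 1) (hh_int θ' 1)
  have habs1 : |E1| ≤ A1 := by
    rw [hE1, hA1]
    exact intervalIntegral.abs_integral_le_integral_abs hθ'0
  have habs2 : |E2| ≤ A2 := by
    rw [hE2, hA2]
    exact intervalIntegral.abs_integral_le_integral_abs hθ'1
  have hA1nn : 0 ≤ A1 :=
    intervalIntegral.integral_nonneg hθ'0 fun u _ => abs_nonneg _
  have hA2nn : 0 ≤ A2 :=
    intervalIntegral.integral_nonneg hθ'1 fun u _ => abs_nonneg _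
  -- Φ(θ') = θ' I − ∫_{θ'}^1 g
  set Φ := θ' * I - ∫ t in θ'..1, g t with hΦ
  have hΦ_eq : Φ = θ' * E1 - (1 - θ') * E2 := by
    have hIJ : I - J = E1 + E2 := by
      rw [hE1', hE2', hI, hJ]
      linarith [hsplit_g, hsplit_h]
    have : Φ = θ' * (I - J) - E2 := by
      rw [hΦ, hE2']
      have := hθ'J
      linarith
    rw [this, hIJ]; ring
  have hΦ_abs : |Φ| ≤ A1 + A2 := by
    rw [hΦ_eq]
    calc |θ' * E1 - (1 - θ') * E2| ≤ |θ' * E1| + |(1 - θ') * E2| := abs_sub _ _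
      _ = θ' * |E1| + (1 - θ') * |E2| := by
          rw [abs_mul, abs_mul, abs_of_nonneg hθ'0, abs_of_nonneg (show (0:ℝ) ≤ 1 - θ' by linarith)]
      _ ≤ 1 * A1 + 1 * A2 := by
          have h1 : θ' * |E1| ≤ 1 * A1 :=
            mul_le_mul hθ'1 habs1 (abs_nonneg _) (by norm_num)
          have h2 : (1 - θ') * |E2| ≤ 1 * A2 :=
            mul_le_mul (by linarith) habs2 (abs_nonneg _) (by norm_num)
          linarith
      _ = A1 + A2 := by ring
  -- Φ = (θ' − θ) I + ∫_θ^{θ'} g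
  have hΦ_eq2 : Φ = (θ' - θ) * I + ∫ t in θ..θ', g t := by
    have hsplit : (∫ t in θ..θ', g t) + ∫ t in θ'..1, g t = ∫ t in θ..1, g t :=
      intervalIntegral.integral_add_adjacent_intervals (hg_int θ θ') (hg_int θ' 1)
    rw [hΦ]
    have := hθI
    linarith
  have hlow : |θ - θ'| * I ≤ |Φ| := by
    rcases le_total θ θ' with hle | hle
    · have hgnn : 0 ≤ ∫ t in θ..θ', g t :=
        intervalIntegral.integral_nonneg hle fun u _ => ENNReal.toReal_nonneg
      have : (θ' - θ) * I ≤ Φ := by rw [hΦ_eq2]; linarith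
      rw [abs_of_nonpos (by linarith)]
      calc -(θ - θ') * I = (θ' - θ) * I := by ring
        _ ≤ Φ := this
        _ ≤ |Φ| := le_abs_self Φ
    · have hgnn : 0 ≤ ∫ t in θ'..θ, g t :=
        intervalIntegral.integral_nonneg hle fun u _ => ENNReal.toReal_nonneg
      have hswap : (∫ t in θ..θ', g t) = -∫ t in θ'..θ, g t :=
        intervalIntegral.integral_symm θ' θ
      have : Φ ≤ (θ' - θ) * I := by rw [hΦ_eq2, hswap]; linarith
      rw [abs_of_nonneg (by linarith)]
      calc (θ - θ') * I ≤ -Φ := by linarith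
        _ ≤ |Φ| := neg_le_abs Φ
  calc |θ - θ'| * I ≤ |Φ| := hlow
    _ ≤ A1 + A2 := hΦ_abs
    _ = ∫ t in (0:ℝ)..1, |g t - h t| := hsplit_abs
end

section
/- (Peeling bound.) Suppose P_X(0 < |η(X) − θ*| ≤ δ) ≤ c0 δ^α for every δ > 0 with constants c0 > 0, α > 0, and let η̂ be an estimator based on D_n satisfying the exponential concentration assumption: for all t > 0, P^{⊗n}(|η̂(x) − η(x)| ≥ t) ≤ C1 exp(−C2 a_n t²) for P_X-almost every x. Then there exists a constant C' > 0 depending only on α, c0, C1, C2 such that E_{D_n} E_{X ~ P_X}[ |η(X) − θ*| · 1{|η(X) − θ*| ≤ 2 |η̂(X) − η(X)|} ] ≤ C' a_n^{−(1+α)/2}. -/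
open MeasureTheory Set

lemma aux_pow_le_exp (m : ℕ) {u : ℝ} (hu : 0 ≤ u) : u ^ m / m.factorial ≤ Real.exp u := by
  have h := Real.sum_le_exp_of_nonneg hu (m + 1)
  refine le_trans ?_ h
  have := Finset.single_le_sum (f := fun i => u ^ i / i.factorial)
    (fun i _ => by positivity) (Finset.self_mem_range_succ m)
  simpa using this

lemma aux_exp_neg_le (m : ℕ) {u : ℝ} (hu : 0 < u) :
    Real.exp (-u) ≤ m.factorial / u ^ m := by
  have h := aux_pow_le_exp m hu.le
  have hm : (0:ℝ) < m.factorial := by exact_mod_cast m.factorial_pos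
  rw [div_le_iff₀ hm] at h
  rw [Real.exp_neg, le_div_iff₀ (pow_pos hu m), inv_mul_le_iff₀ (Real.exp_pos u)]
  nlinarith [Real.exp_pos u]

lemma aux_geom_sum {r : ℝ} (h0 : 0 ≤ r) (h1 : r < 1) (n : ℕ) :
    ∑ i ∈ Finset.range n, r ^ i ≤ (1 - r)⁻¹ := by
  have h2 : (0:ℝ) < 1 - r := by linarith
  rw [geom_sum_eq (ne_of_lt h1)]
  rw [show (r ^ n - 1) / (r - 1) = (1 - r ^ n) / (1 - r) by
    rw [show r ^ n - 1 = -(1 - r ^ n) by ring, show r - 1 = -(1 - r) by ring, neg_div_neg_eq]]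
  rw [div_le_iff₀ h2, inv_mul_cancel₀ h2.ne']
  have : 0 ≤ r ^ n := pow_nonneg h0 n
  linarith

open ENNReal

theorem statement11 (α c0 C1 C2 : ℝ) (hα : 0 < α) (hc0 : 0 < c0)
    (hC1 : 0 < C1) (hC2 : 0 < C2) :
    ∃ C' > (0 : ℝ), ∀ (d : ℕ) (μ : Measure (EuclideanSpace ℝ (Fin d)))
      (_ : IsProbabilityMeasure μ)
      (Ω : Type) (_ : MeasurableSpace Ω) (Pn : Measure Ω)
      (_ : IsProbabilityMeasure Pn)
      (η : EuclideanSpace ℝ (Fin d) → ℝ)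
      (ηhat : Ω → EuclideanSpace ℝ (Fin d) → ℝ) (θstar a : ℝ),
      0 < a →
      Measurable η → (∀ x, η x ∈ Icc (0 : ℝ) 1) →
      0 < ∫ x, η x ∂μ →
      Measurable (fun z : Ω × EuclideanSpace ℝ (Fin d) => ηhat z.1 z.2) →
      (∀ ω x, ηhat ω x ∈ Icc (0 : ℝ) 1) →
      θstar ∈ Icc (0 : ℝ) 1 →
      θstar * ∫ x, η x ∂μ = ∫ x, max (η x - θstar) 0 ∂μ →
      (∀ δ > (0 : ℝ),
        (μ {x | 0 < |η x - θstar| ∧ |η x - θstar| ≤ δ}).toReal ≤ c0 * δ ^ α) →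
      (∀ t > (0 : ℝ), ∀ᵐ x ∂μ,
        (Pn {ω | t ≤ |ηhat ω x - η x|}).toReal ≤ C1 * Real.exp (-C2 * a * t ^ 2)) →
      ∫ ω, (∫ x in {x | |η x - θstar| ≤ 2 * |ηhat ω x - η x|},
          |η x - θstar| ∂μ) ∂Pn ≤ C' * a ^ (-(1 + α) / 2) := by
  -- constants
  obtain ⟨m, hm1, hαm⟩ : ∃ m : ℕ, 1 ≤ m ∧ α < (m : ℝ) :=
    ⟨⌈α⌉₊ + 1, Nat.le_add_left _ _, by push_cast; linarith [Nat.le_ceil α]⟩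
  set b : ℝ := (2 : ℝ) ^ (1 + α) with hbdef
  have hb : 0 < b := Real.rpow_pos_of_pos two_pos _
  have hb4 : b < 4 ^ m := by
    have h1 : b < (2:ℝ) ^ ((1 + m : ℕ) : ℝ) := by
      rw [hbdef]
      apply Real.rpow_lt_rpow_left_iff (x := 2) one_lt_two |>.mpr
      push_cast; linarith
    rw [Real.rpow_natCast] at h1
    refine lt_of_lt_of_le h1 ?_
    have : (4:ℝ) ^ m = 2 ^ m * 2 ^ m := by rw [show (4:ℝ) = 2 * 2 by norm_num, mul_pow]
    rw [this, pow_add, pow_one]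
    have h2 : (2:ℝ) ≤ 2 ^ m := by
      calc (2:ℝ) = 2 ^ 1 := (pow_one 2).symm
      _ ≤ 2 ^ m := pow_le_pow_right₀ one_le_two (by omega)
    nlinarith [pow_pos (show (0:ℝ) < 2 by norm_num) m]
  set r : ℝ := b / 4 ^ m with hrdef
  have hr0 : 0 ≤ r := by positivity
  have hr1 : r < 1 := (div_lt_one (by positivity)).mpr hb4
  set K : ℝ := c0 * C1 * m.factorial * (4 / C2) ^ m * b with hKdef
  have hK : 0 < K := by
    have : (0:ℝ) < m.factorial := by exact_mod_cast m.factorial_pos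
    positivity
  have h1r : (0:ℝ) < 1 - r := by linarith
  refine ⟨c0 + K * (1 - r)⁻¹, add_pos hc0 (mul_pos hK (inv_pos.mpr h1r)), ?_⟩
  intro d μ hμ Ω mΩ Pn hPn η ηhat θstar a ha hηm hη01 _hint hhatm hhat01 hθ _hθeq hmargin hconc
  set Z : EuclideanSpace ℝ (Fin d) → ℝ := fun x => |η x - θstar| with hZdef
  have hZm : Measurable Z := (hηm.sub measurable_const).abs
  have hZ0 : ∀ x, 0 ≤ Z x := fun x => abs_nonneg _
  have hZ1 : ∀ x, Z x ≤ 1 := by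
    intro x
    rw [hZdef, abs_le]
    constructor <;> [linarith [(hη01 x).1, hθ.2]; linarith [(hη01 x).2, hθ.1]]
  set δ : ℝ := a ^ (-(1:ℝ)/2) with hδdef
  have hδ : 0 < δ := Real.rpow_pos_of_pos ha _
  have hδ2 : a * δ ^ 2 = 1 := by
    rw [hδdef, ← Real.rpow_natCast (a ^ (-(1:ℝ)/2)) 2, ← Real.rpow_mul ha.le]
    norm_num
    rw [Real.rpow_neg_one]
    exact mul_inv_cancel₀ ha.ne'
  have hδP : δ ^ (1 + α) = a ^ (-(1 + α) / 2) := by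
    rw [hδdef, ← Real.rpow_mul ha.le]
    ring_nf
  obtain ⟨J, hJ⟩ : ∃ J : ℕ, 1 / δ < 2 ^ J := pow_unbounded_of_one_lt _ one_lt_two
  have hJδ : 1 ≤ 2 ^ J * δ := by
    rw [div_lt_iff₀ hδ] at hJ
    linarith
  -- measurable sets
  set S : Set (Ω × EuclideanSpace ℝ (Fin d)) :=
    {p | Z p.2 ≤ 2 * |ηhat p.1 p.2 - η p.2|} with hSdef
  have hdiffm : Measurable fun p : Ω × EuclideanSpace ℝ (Fin d) =>
      |ηhat p.1 p.2 - η p.2| := (hhatm.sub (hηm.comp measurable_snd)).abs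
  have hSm : MeasurableSet S :=
    measurableSet_le (hZm.comp measurable_snd) (measurable_const.mul hdiffm)
  set G : Ω × EuclideanSpace ℝ (Fin d) → ℝ≥0∞ :=
    fun p => S.indicator (fun q => ENNReal.ofReal (Z q.2)) p with hGdef
  have hGm : Measurable G :=
    (ENNReal.measurable_ofReal.comp (hZm.comp measurable_snd)).indicator hSm
  have hGle : ∀ p, G p ≤ 1 := by
    intro p
    refine le_trans (Set.indicator_le_self _ _ p) ?_
    simpa using ENNReal.ofReal_le_one.mpr (hZ1 p.2)
  -- rewrite LHS as a double lintegral
  have hmeasIn : Measurable fun ω => ∫⁻ x, G (ω, x) ∂μ := hGm.lintegral_prod_right'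
  have hinner : ∀ ω, ∫ x in {x | Z x ≤ 2 * |ηhat ω x - η x|}, Z x ∂μ
      = (∫⁻ x, G (ω, x) ∂μ).toReal := by
    intro ω
    have hAm : MeasurableSet {x | Z x ≤ 2 * |ηhat ω x - η x|} := by
      have : Measurable fun x => ηhat ω x :=
        hhatm.comp (measurable_prodMk_left (x := ω))
      exact measurableSet_le hZm (measurable_const.mul ((this.sub hηm).abs))
    rw [integral_eq_lintegral_of_nonneg_ae (ae_of_all _ hZ0)
      hZm.aestronglyMeasurable.restrict]
    rw [← lintegral_indicator hAm]
    congr 1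
  have hLHS : ∫ ω, (∫ x in {x | Z x ≤ 2 * |ηhat ω x - η x|}, Z x ∂μ) ∂Pn
      = (∫⁻ ω, ∫⁻ x, G (ω, x) ∂μ ∂Pn).toReal := by
    rw [integral_congr_ae (ae_of_all _ hinner)]
    refine integral_toReal hmeasIn.aemeasurable (ae_of_all _ fun ω => ?_)
    calc ∫⁻ x, G (ω, x) ∂μ ≤ ∫⁻ _, 1 ∂μ := lintegral_mono fun x => hGle _
    _ = 1 := by simp
    _ < ⊤ := by norm_num
  -- peeling sets
  set B0 : Set (EuclideanSpace ℝ (Fin d)) := {x | 0 < Z x ∧ Z x ≤ δ} with hB0def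
  have hB0m : MeasurableSet B0 := by
    rw [hB0def, Set.setOf_and]
    exact (measurableSet_lt measurable_const hZm).inter (measurableSet_le hZm measurable_const)
  set Rng : ℕ → Set (EuclideanSpace ℝ (Fin d)) :=
    fun j => {x | 2 ^ j * δ < Z x ∧ Z x ≤ 2 ^ (j + 1) * δ} with hRngdef
  have hRngm : ∀ j, MeasurableSet (Rng j) := by
    intro j
    rw [hRngdef]
    simp only [Set.setOf_and]
    exact (measurableSet_lt measurable_const hZm).inter (measurableSet_le hZm measurable_const)
  set T : ℕ → Set (Ω × EuclideanSpace ℝ (Fin d)) :=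
    fun j => {p | p.2 ∈ Rng j ∧ 2 ^ j * δ / 2 ≤ |ηhat p.1 p.2 - η p.2|} with hTdef
  have hTm : ∀ j, MeasurableSet (T j) := by
    intro j
    rw [hTdef]
    simp only [Set.setOf_and]
    exact (measurable_snd (hRngm j)).inter (measurableSet_le measurable_const hdiffm)
  set H : Ω × EuclideanSpace ℝ (Fin d) → ℝ≥0∞ := fun p =>
    B0.indicator (fun x => ENNReal.ofReal (Z x)) p.2
      + ∑ j ∈ Finset.range (J + 1),
        (T j).indicator (fun _ => ENNReal.ofReal (2 ^ (j + 1) * δ)) p with hHdef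
  -- pointwise peeling bound
  have hGH : ∀ ω x, G (ω, x) ≤ H (ω, x) := by
    intro ω x
    by_cases hp : (ω, x) ∈ S
    · rw [hGdef]
      simp only [Set.indicator_of_mem hp]
      rcases le_or_gt (Z x) δ with hle | hgt
      · rcases (hZ0 x).eq_or_lt with h0 | h0
        · simp [← h0]
        · have hx0 : x ∈ B0 := ⟨h0, hle⟩
          calc ENNReal.ofReal (Z x)
              = B0.indicator (fun y => ENNReal.ofReal (Z y)) x :=
                (Set.indicator_of_mem hx0 fun y => ENNReal.ofReal (Z y)).symm
            _ ≤ H (ω, x) := le_self_add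
      · classical
        obtain ⟨j, hjlt, hj, hnot⟩ :
            ∃ j, j < J ∧ 2 ^ j * δ < Z x ∧ ¬ (2 ^ (j + 1) * δ < Z x) := by
          have hP0 : 2 ^ 0 * δ < Z x := by simpa using hgt
          have hPJ : ¬ (2 ^ J * δ < Z x) := not_lt.mpr (le_trans (hZ1 x) hJδ)
          have hj : 2 ^ (Nat.findGreatest (fun j => 2 ^ j * δ < Z x) J) * δ < Z x :=
            Nat.findGreatest_spec (P := fun j => 2 ^ j * δ < Z x) (Nat.zero_le J) hP0
          have hjle := Nat.findGreatest_le (P := fun j => 2 ^ j * δ < Z x) J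
          have hjlt : Nat.findGreatest (fun j => 2 ^ j * δ < Z x) J < J :=
            lt_of_le_of_ne hjle (by intro h; rw [h] at hj; exact hPJ hj)
          exact ⟨_, hjlt, hj,
            Nat.findGreatest_is_greatest (P := fun j => 2 ^ j * δ < Z x)
              (Nat.lt_succ_self _) (by omega)⟩
        have hring : x ∈ Rng j := ⟨hj, not_lt.mp hnot⟩
        have hT : (ω, x) ∈ T j := by
          refine ⟨hring, ?_⟩
          have h1 : Z x ≤ 2 * |ηhat ω x - η x| := hp
          linarith
        calc ENNReal.ofReal (Z x)
            ≤ ENNReal.ofReal (2 ^ (j + 1) * δ) := ENNReal.ofReal_le_ofReal hring.2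
          _ = (T j).indicator (fun _ => ENNReal.ofReal (2 ^ (j + 1) * δ)) (ω, x) :=
              (Set.indicator_of_mem hT fun _ => ENNReal.ofReal (2 ^ (j + 1) * δ)).symm
          _ ≤ ∑ i ∈ Finset.range (J + 1),
              (T i).indicator (fun _ => ENNReal.ofReal (2 ^ (i + 1) * δ)) (ω, x) :=
              Finset.single_le_sum
                (f := fun i => (T i).indicator
                  (fun _ => ENNReal.ofReal (2 ^ (i + 1) * δ)) (ω, x))
                (fun i _ => zero_le) (Finset.mem_range.mpr (by omega))
          _ ≤ H (ω, x) := le_add_self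
    · rw [hGdef]
      simp [Set.indicator_of_notMem hp]
  -- first (small margin) term
  have hfirst : ∫⁻ x, B0.indicator (fun y => ENNReal.ofReal (Z y)) x ∂μ
      ≤ ENNReal.ofReal (c0 * δ ^ (1 + α)) := by
    have hmono : ∀ x, B0.indicator (fun y => ENNReal.ofReal (Z y)) x
        ≤ B0.indicator (fun _ => ENNReal.ofReal δ) x := by
      intro x
      by_cases hx : x ∈ B0
      · rw [Set.indicator_of_mem hx fun y => ENNReal.ofReal (Z y),
          Set.indicator_of_mem hx fun _ => ENNReal.ofReal δ]
        exact ENNReal.ofReal_le_ofReal hx.2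
      · simp [Set.indicator_of_notMem hx]
    refine le_trans (lintegral_mono hmono) ?_
    rw [lintegral_indicator_const hB0m]
    have hμB : μ B0 ≤ ENNReal.ofReal (c0 * δ ^ α) := by
      have hmB := hmargin δ hδ
      calc μ B0 = ENNReal.ofReal ((μ B0).toReal) :=
            (ENNReal.ofReal_toReal (measure_ne_top _ _)).symm
        _ ≤ ENNReal.ofReal (c0 * δ ^ α) := ENNReal.ofReal_le_ofReal hmB
    calc ENNReal.ofReal δ * μ B0
        ≤ ENNReal.ofReal δ * ENNReal.ofReal (c0 * δ ^ α) := mul_le_mul_right hμB _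
      _ = ENNReal.ofReal (δ * (c0 * δ ^ α)) := (ENNReal.ofReal_mul hδ.le).symm
      _ = ENNReal.ofReal (c0 * δ ^ (1 + α)) := by
          congr 1
          rw [Real.rpow_add hδ, Real.rpow_one]
          ring
  -- peeled terms
  set term : ℕ → ℝ := fun j => (2 ^ (j + 1) * δ)
      * (C1 * Real.exp (-C2 * a * (2 ^ j * δ / 2) ^ 2))
      * (c0 * (2 ^ (j + 1) * δ) ^ α) with htermdef
  have hterm_nonneg : ∀ j, 0 ≤ term j := by
    intro j
    simp only [htermdef]
    have := Real.exp_nonneg (-C2 * a * (2 ^ j * δ / 2) ^ 2)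
    have h1 : (0:ℝ) ≤ (2 ^ (j + 1) * δ) ^ α := Real.rpow_nonneg (by positivity) _
    positivity
  have hEm : ∀ (x : EuclideanSpace ℝ (Fin d)) (t : ℝ),
      MeasurableSet {ω | t ≤ |ηhat ω x - η x|} := by
    intro x t
    have hmx : Measurable fun ω => ηhat ω x := hhatm.comp (measurable_prodMk_right (y := x))
    exact measurableSet_le measurable_const ((hmx.sub measurable_const).abs)
  have hterm : ∀ j, ∫⁻ ω, ∫⁻ x,
        (T j).indicator (fun _ => ENNReal.ofReal (2 ^ (j + 1) * δ)) (ω, x) ∂μ ∂Pn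
      ≤ ENNReal.ofReal (term j) := by
    intro j
    have htj : (0:ℝ) < 2 ^ j * δ / 2 := by positivity
    have hswapm : AEMeasurable
        (Function.uncurry fun ω x =>
          (T j).indicator (fun _ => ENNReal.ofReal (2 ^ (j + 1) * δ)) (ω, x))
        (Pn.prod μ) := by
      have := (measurable_const.indicator (hTm j) :
        Measurable ((T j).indicator (fun _ => ENNReal.ofReal (2 ^ (j + 1) * δ))))
      exact this.aemeasurable
    rw [lintegral_lintegral_swap hswapm]
    have hswap2 : ∀ x, ∫⁻ ω,
          (T j).indicator (fun _ => ENNReal.ofReal (2 ^ (j + 1) * δ)) (ω, x) ∂Pn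
        = (Rng j).indicator (fun y => ENNReal.ofReal (2 ^ (j + 1) * δ)
            * Pn {ω' | 2 ^ j * δ / 2 ≤ |ηhat ω' y - η y|}) x := by
      intro x
      by_cases hx : x ∈ Rng j
      · rw [Set.indicator_of_mem hx]
        have heq : ∀ ω, (T j).indicator
              (fun _ => ENNReal.ofReal (2 ^ (j + 1) * δ)) (ω, x)
            = ({ω' | 2 ^ j * δ / 2 ≤ |ηhat ω' x - η x|}).indicator
              (fun _ => ENNReal.ofReal (2 ^ (j + 1) * δ)) ω := by
          intro ω
          by_cases hω : 2 ^ j * δ / 2 ≤ |ηhat ω x - η x|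
          · have h1 : (ω, x) ∈ T j := ⟨hx, hω⟩
            have h2 : ω ∈ {ω' | 2 ^ j * δ / 2 ≤ |ηhat ω' x - η x|} := hω
            rw [Set.indicator_of_mem h1, Set.indicator_of_mem h2]
          · have h1 : (ω, x) ∉ T j := fun hc => hω hc.2
            have h2 : ω ∉ {ω' | 2 ^ j * δ / 2 ≤ |ηhat ω' x - η x|} := hω
            rw [Set.indicator_of_notMem h1, Set.indicator_of_notMem h2]
        simp_rw [heq]
        rw [lintegral_indicator_const (hEm x _)]
      · rw [Set.indicator_of_notMem hx]
        have heq : ∀ ω, (T j).indicator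
            (fun _ => ENNReal.ofReal (2 ^ (j + 1) * δ)) (ω, x) = 0 := fun ω =>
          Set.indicator_of_notMem (fun hc => hx hc.1) _
        simp_rw [heq, lintegral_zero]
    rw [lintegral_congr hswap2, lintegral_indicator (hRngm j)]
    have hbound : ∀ᵐ x ∂(μ.restrict (Rng j)),
        ENNReal.ofReal (2 ^ (j + 1) * δ) * Pn {ω' | 2 ^ j * δ / 2 ≤ |ηhat ω' x - η x|}
          ≤ ENNReal.ofReal (2 ^ (j + 1) * δ)
            * ENNReal.ofReal (C1 * Real.exp (-C2 * a * (2 ^ j * δ / 2) ^ 2)) := by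
      filter_upwards [ae_restrict_of_ae (hconc _ htj)] with x hx
      refine mul_le_mul_right ?_ _
      calc Pn {ω' | 2 ^ j * δ / 2 ≤ |ηhat ω' x - η x|}
          = ENNReal.ofReal ((Pn {ω' | 2 ^ j * δ / 2 ≤ |ηhat ω' x - η x|}).toReal) :=
            (ENNReal.ofReal_toReal (measure_ne_top _ _)).symm
        _ ≤ _ := ENNReal.ofReal_le_ofReal hx
    refine le_trans (lintegral_mono_ae hbound) ?_
    rw [setLIntegral_const]
    have hμR : μ (Rng j) ≤ ENNReal.ofReal (c0 * (2 ^ (j + 1) * δ) ^ α) := by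
      have hsub : Rng j ⊆ {x | 0 < |η x - θstar| ∧ |η x - θstar| ≤ 2 ^ (j + 1) * δ} := by
        intro x hx
        refine ⟨lt_trans (by positivity) hx.1, hx.2⟩
      have hmB := hmargin (2 ^ (j + 1) * δ) (by positivity)
      calc μ (Rng j) ≤ μ {x | 0 < |η x - θstar| ∧ |η x - θstar| ≤ 2 ^ (j + 1) * δ} :=
            measure_mono hsub
        _ = ENNReal.ofReal
            ((μ {x | 0 < |η x - θstar| ∧ |η x - θstar| ≤ 2 ^ (j + 1) * δ}).toReal) :=
            (ENNReal.ofReal_toReal (measure_ne_top _ _)).symm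
        _ ≤ _ := ENNReal.ofReal_le_ofReal hmB
    calc ENNReal.ofReal (2 ^ (j + 1) * δ)
          * ENNReal.ofReal (C1 * Real.exp (-C2 * a * (2 ^ j * δ / 2) ^ 2)) * μ (Rng j)
        ≤ ENNReal.ofReal (2 ^ (j + 1) * δ)
          * ENNReal.ofReal (C1 * Real.exp (-C2 * a * (2 ^ j * δ / 2) ^ 2))
          * ENNReal.ofReal (c0 * (2 ^ (j + 1) * δ) ^ α) := mul_le_mul_right hμR _
      _ = ENNReal.ofReal (term j) := by
          simp only [htermdef]
          rw [← ENNReal.ofReal_mul (by positivity), ← ENNReal.ofReal_mul (by positivity)]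
  -- decomposition of the double integral of H
  have hTmeas : ∀ j, Measurable fun p : Ω × EuclideanSpace ℝ (Fin d) =>
      (T j).indicator (fun _ => ENNReal.ofReal (2 ^ (j + 1) * δ)) p :=
    fun j => measurable_const.indicator (hTm j)
  have hB0meas : Measurable fun x => B0.indicator (fun y => ENNReal.ofReal (Z y)) x :=
    (ENNReal.measurable_ofReal.comp hZm).indicator hB0m
  have hdecomp : ∫⁻ ω, ∫⁻ x, H (ω, x) ∂μ ∂Pn
      = (∫⁻ x, B0.indicator (fun y => ENNReal.ofReal (Z y)) x ∂μ)
        + ∑ j ∈ Finset.range (J + 1), ∫⁻ ω, ∫⁻ x,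
            (T j).indicator (fun _ => ENNReal.ofReal (2 ^ (j + 1) * δ)) (ω, x) ∂μ ∂Pn := by
    have hstep : ∀ ω, ∫⁻ x, H (ω, x) ∂μ
        = (∫⁻ x, B0.indicator (fun y => ENNReal.ofReal (Z y)) x ∂μ)
          + ∑ j ∈ Finset.range (J + 1), ∫⁻ x,
              (T j).indicator (fun _ => ENNReal.ofReal (2 ^ (j + 1) * δ)) (ω, x) ∂μ := by
      intro ω
      simp only [hHdef]
      rw [lintegral_add_left hB0meas]
      congr 1
      exact lintegral_finset_sum _
        (fun j _ => (hTmeas j).comp (measurable_prodMk_left (x := ω)))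
    rw [lintegral_congr hstep, lintegral_add_left measurable_const]
    congr 1
    · simp
    · exact lintegral_finset_sum _ (fun j _ => (hTmeas j).lintegral_prod_right')
  -- combine the ENNReal bounds
  have hmain : ∫⁻ ω, ∫⁻ x, G (ω, x) ∂μ ∂Pn
      ≤ ENNReal.ofReal (c0 * δ ^ (1 + α) + ∑ j ∈ Finset.range (J + 1), term j) := by
    calc ∫⁻ ω, ∫⁻ x, G (ω, x) ∂μ ∂Pn ≤ ∫⁻ ω, ∫⁻ x, H (ω, x) ∂μ ∂Pn :=
        lintegral_mono fun ω => lintegral_mono fun x => hGH ω x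
      _ = _ := hdecomp
      _ ≤ ENNReal.ofReal (c0 * δ ^ (1 + α))
          + ∑ j ∈ Finset.range (J + 1), ENNReal.ofReal (term j) :=
        add_le_add hfirst (Finset.sum_le_sum fun j _ => hterm j)
      _ = _ := by
        rw [ENNReal.ofReal_add (by positivity) (Finset.sum_nonneg fun j _ => hterm_nonneg j),
          ENNReal.ofReal_sum_of_nonneg (fun j _ => hterm_nonneg j)]
  -- real arithmetic: per-term bound
  have htermle : ∀ j, term j ≤ K * δ ^ (1 + α) * r ^ j := by
    intro j
    have hR : (0:ℝ) < 2 ^ (j + 1) * δ := by positivity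
    have h4 : ((2:ℝ) ^ j) ^ 2 = 4 ^ j := by
      calc ((2:ℝ) ^ j) ^ 2 = 2 ^ (j * 2) := (pow_mul 2 j 2).symm
        _ = (2 ^ 2) ^ j := by rw [mul_comm, pow_mul]
        _ = 4 ^ j := by norm_num
    have hexparg : -C2 * a * (2 ^ j * δ / 2) ^ 2 = -(C2 * 4 ^ j / 4) := by
      calc -C2 * a * (2 ^ j * δ / 2) ^ 2
          = -(C2 * ((2 ^ j) ^ 2) / 4) * (a * δ ^ 2) := by ring
        _ = -(C2 * 4 ^ j / 4) := by rw [h4, hδ2, mul_one]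
    have hu : (0:ℝ) < C2 * 4 ^ j / 4 := by positivity
    have hexp : Real.exp (-(C2 * 4 ^ j / 4))
        ≤ m.factorial * (4 / C2) ^ m / (4 ^ j) ^ m := by
      refine le_trans (aux_exp_neg_le m hu) (le_of_eq ?_)
      have h1 : (C2:ℝ) ^ m ≠ 0 := by positivity
      have h2 : ((4:ℝ) ^ j) ^ m ≠ 0 := by positivity
      rw [div_pow, mul_pow, div_pow]
      field_simp
    have hpow : ((2:ℝ) ^ (j + 1) * δ) ^ (1 + α) = b ^ (j + 1) * δ ^ (1 + α) := by
      rw [Real.mul_rpow (by positivity) hδ.le]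
      congr 1
      rw [← Real.rpow_natCast (2:ℝ) (j + 1), ← Real.rpow_mul (by norm_num : (0:ℝ) ≤ 2),
        mul_comm (((j + 1 : ℕ)):ℝ) (1 + α), Real.rpow_mul (by norm_num : (0:ℝ) ≤ 2),
        Real.rpow_natCast]
    have hterm_eq : term j
        = c0 * C1 * (b ^ (j + 1) * δ ^ (1 + α)) * Real.exp (-(C2 * 4 ^ j / 4)) := by
      simp only [htermdef]
      rw [hexparg, ← hpow, Real.rpow_add hR, Real.rpow_one]
      ring
    rw [hterm_eq]
    have hnn : 0 ≤ c0 * C1 * (b ^ (j + 1) * δ ^ (1 + α)) := by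
      have := Real.rpow_nonneg hδ.le (1 + α)
      positivity
    calc c0 * C1 * (b ^ (j + 1) * δ ^ (1 + α)) * Real.exp (-(C2 * 4 ^ j / 4))
        ≤ c0 * C1 * (b ^ (j + 1) * δ ^ (1 + α))
          * (m.factorial * (4 / C2) ^ m / (4 ^ j) ^ m) :=
          mul_le_mul_of_nonneg_left hexp hnn
      _ = K * δ ^ (1 + α) * r ^ j := by
          rw [hKdef, hrdef,
            show ((b / 4 ^ m) ^ j : ℝ) = b ^ j / (4 ^ j) ^ m from by
              rw [div_pow, ← pow_mul, ← pow_mul, Nat.mul_comm],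
            pow_succ]
          have h1 : (C2:ℝ) ^ m ≠ 0 := by positivity
          have h2 : ((4:ℝ) ^ j) ^ m ≠ 0 := by positivity
          field_simp
  have hsum : ∑ j ∈ Finset.range (J + 1), term j ≤ K * δ ^ (1 + α) * (1 - r)⁻¹ := by
    calc ∑ j ∈ Finset.range (J + 1), term j
        ≤ ∑ j ∈ Finset.range (J + 1), K * δ ^ (1 + α) * r ^ j :=
        Finset.sum_le_sum fun j _ => htermle j
      _ = K * δ ^ (1 + α) * ∑ j ∈ Finset.range (J + 1), r ^ j := by
        rw [Finset.mul_sum]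
      _ ≤ K * δ ^ (1 + α) * (1 - r)⁻¹ :=
        mul_le_mul_of_nonneg_left (aux_geom_sum hr0 hr1 _)
          (mul_nonneg hK.le (Real.rpow_nonneg hδ.le _))
  have hfinal : c0 * δ ^ (1 + α) + ∑ j ∈ Finset.range (J + 1), term j
      ≤ (c0 + K * (1 - r)⁻¹) * a ^ (-(1 + α) / 2) := by
    rw [← hδP]
    calc c0 * δ ^ (1 + α) + ∑ j ∈ Finset.range (J + 1), term j
        ≤ c0 * δ ^ (1 + α) + K * δ ^ (1 + α) * (1 - r)⁻¹ := add_le_add_right hsum _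
      _ = (c0 + K * (1 - r)⁻¹) * δ ^ (1 + α) := by ring
  refine le_trans (le_of_eq hLHS) ?_
  calc (∫⁻ ω, ∫⁻ x, G (ω, x) ∂μ ∂Pn).toReal
      ≤ (ENNReal.ofReal (c0 * δ ^ (1 + α)
          + ∑ j ∈ Finset.range (J + 1), term j)).toReal :=
        ENNReal.toReal_mono ENNReal.ofReal_ne_top hmain
    _ = c0 * δ ^ (1 + α) + ∑ j ∈ Finset.range (J + 1), term j :=
        ENNReal.toReal_ofReal (add_nonneg
          (mul_nonneg hc0.le (Real.rpow_nonneg hδ.le _))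
          (Finset.sum_nonneg fun j _ => hterm_nonneg j))
    _ ≤ (c0 + K * (1 - r)⁻¹) * a ^ (-(1 + α) / 2) := hfinal
end

section
/- (Theorem 2, threshold estimation rate.) Suppose P(Y=1) ≥ p > 0, the distribution P satisfies the α-margin assumption with constants C0 > 0, δ0 ∈ (0, 1/12], α > 0, and there exists an estimator η̂ based on D_n satisfying the exponential concentration assumption: for all t > 0, P^{⊗n}(|η̂(x) − η(x)| ≥ t) ≤ C1 exp(−C2 a_n t²) for P_X-almost every x. Let θ̂ ∈ [0,1] be the solution of θ · (1/N) Σ_{X_i ∈ D_N} η̂(X_i) = (1/N) Σ_{X_i ∈ D_N} (η̂(X_i) − θ)_+. Then there exists a constant C > 0 depending only on C0, C1, C2, p such that E_{(D_n, D_N)} |θ* − θ̂| ≤ C ( a_n^{−1/2} + N^{−1/2} ). -/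
/-!
STATEMENT 13 (Theorem 2, threshold estimation rate): suppose P(Y=1) ≥ p > 0,
the α-margin assumption holds (constants C0 > 0, δ0 ∈ (0,1/12], α > 0) and the
estimator η̂ based on D_n (modelled by a probability space (Ω, P_n)) satisfies
the exponential concentration assumption
  ∀ t > 0,  P_n(|η̂(x) − η(x)| ≥ t) ≤ C1 exp(−C2 a_n t²)  for P_X-a.e. x.
Let θ̂ ∈ [0,1] solve θ (1/N) Σ_i η̂(X_i) = (1/N) Σ_i (η̂(X_i) − θ)_+ on the
unlabeled sample D_N = (X_{n+1}, …, X_{n+N}) ∼ P_X^{⊗N}.  Then there exists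
C > 0 depending only on C0, C1, C2, p such that
  E_{(D_n, D_N)} |θ* − θ̂| ≤ C (a_n^{−1/2} + N^{−1/2}).
θ* ∈ [0,1] is the unique solution of θ P(Y=1) = E[(η(X) − θ)_+],
P(Y=1) = ∫ η dP_X.
-/

open MeasureTheory Set

open MeasureTheory Set

lemma aux_bddInt {W : Type*} [MeasurableSpace W] (ρ : Measure W) [IsFiniteMeasure ρ]
    {f : W → ℝ} (hf : AEStronglyMeasurable f ρ) {M : ℝ} (hb : ∀ w, |f w| ≤ M) :
    Integrable f ρ :=
  (integrable_const M).mono' hf (Filter.Eventually.of_forall hb)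

lemma aux_L1 (θ y : ℝ) (hθ : 0 ≤ θ) (hy : y ≤ 1) :
    ∫ s in Set.Ioc (0:ℝ) 1, (if θ < s ∧ s < y then (1:ℝ) else 0) = max (y - θ) 0 := by
  have hset : (fun s => if θ < s ∧ s < y then (1:ℝ) else 0)
      = Set.indicator (Set.Ioo θ y) (fun _ => (1:ℝ)) := by
    funext s; by_cases h : θ < s ∧ s < y
    · simp [Set.indicator, Set.mem_Ioo, h]
    · simp only [Set.indicator, Set.mem_Ioo, h, if_false]
  rw [hset, integral_indicator measurableSet_Ioo, setIntegral_const,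
    measureReal_def, Measure.restrict_apply measurableSet_Ioo]
  have hsub : Set.Ioo θ y ∩ Set.Ioc 0 1 = Set.Ioo θ y := by
    apply Set.inter_eq_left.mpr
    intro s hs
    exact ⟨lt_of_le_of_lt hθ hs.1, le_of_lt (lt_of_lt_of_le hs.2 hy)⟩
  rw [hsub, Real.volume_Ioo, ENNReal.toReal_ofReal', smul_eq_mul, mul_one]


lemma aux_rep {W : Type*} [MeasurableSpace W] (ρ : Measure W) [IsFiniteMeasure ρ]
    {Z : W → ℝ} (hZ : Measurable Z) (hZ1 : ∀ w, Z w ≤ 1) {θ : ℝ} (hθ : 0 ≤ θ) :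
    ∫ w, max (Z w - θ) 0 ∂ρ
      = ∫ s in Set.Ioc (0:ℝ) 1, (if θ < s then (ρ {w | s < Z w}).toReal else 0) := by
  haveI : IsFiniteMeasure (volume.restrict (Set.Ioc (0:ℝ) 1)) :=
    ⟨by rw [Measure.restrict_apply_univ]; simp [Real.volume_Ioc]⟩
  have h1 : ∀ w, max (Z w - θ) 0
      = ∫ s in Set.Ioc (0:ℝ) 1, (if θ < s ∧ s < Z w then (1:ℝ) else 0) :=
    fun w => (aux_L1 θ (Z w) hθ (hZ1 w)).symm
  have hFmeas : Measurable (fun q : W × ℝ => if θ < q.2 ∧ q.2 < Z q.1 then (1:ℝ) else 0) := by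
    refine Measurable.ite ?_ measurable_const measurable_const
    exact (measurable_snd measurableSet_Ioi).inter
      (measurableSet_lt measurable_snd (hZ.comp measurable_fst))
  have hswap : ∫ w, (∫ s in Set.Ioc (0:ℝ) 1, (if θ < s ∧ s < Z w then (1:ℝ) else 0)) ∂ρ
      = ∫ s in Set.Ioc (0:ℝ) 1, (∫ w, (if θ < s ∧ s < Z w then (1:ℝ) else 0) ∂ρ) := by
    apply integral_integral_swap
    exact aux_bddInt _ hFmeas.aestronglyMeasurable
      (M := 1) (fun w => by dsimp only [Function.uncurry]; split <;> simp)
  have hinner : ∀ s : ℝ, (∫ w, (if θ < s ∧ s < Z w then (1:ℝ) else 0) ∂ρ)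
      = if θ < s then (ρ {w | s < Z w}).toReal else 0 := by
    intro s
    by_cases hs : θ < s
    · have : (fun w => if θ < s ∧ s < Z w then (1:ℝ) else 0)
          = Set.indicator {w | s < Z w} (fun _ => (1:ℝ)) := by
        funext w; by_cases h : s < Z w
        · simp [Set.indicator, hs, h]
        · simp [Set.indicator, hs, h]
      rw [this, if_pos hs]
      have hms : MeasurableSet {w | s < Z w} := hZ measurableSet_Ioi
      rw [integral_indicator hms, setIntegral_const, smul_eq_mul, mul_one, measureReal_def]
    · simp only [hs, false_and, if_false, integral_zero]
  calc ∫ w, max (Z w - θ) 0 ∂ρ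
      = ∫ w, (∫ s in Set.Ioc (0:ℝ) 1, (if θ < s ∧ s < Z w then (1:ℝ) else 0)) ∂ρ := by
        exact integral_congr_ae (Filter.Eventually.of_forall h1)
    _ = ∫ s in Set.Ioc (0:ℝ) 1, (∫ w, (if θ < s ∧ s < Z w then (1:ℝ) else 0) ∂ρ) := hswap
    _ = ∫ s in Set.Ioc (0:ℝ) 1, (if θ < s then (ρ {w | s < Z w}).toReal else 0) := by
        exact integral_congr_ae (Filter.Eventually.of_forall hinner)


lemma aux_pi_prod {W : Type*} [MeasurableSpace W] (μ : Measure W) [SigmaFinite μ] {N : ℕ}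
    (F : Fin N → W → ℝ) :
    ∫ y : Fin N → W, ∏ i, F i (y i) ∂(Measure.pi fun _ : Fin N => μ)
      = ∏ i, ∫ x, F i x ∂μ := by
  letI : MeasureSpace W := ⟨μ⟩
  haveI : SigmaFinite (volume : Measure W) := ‹SigmaFinite μ›
  exact MeasureTheory.integral_fintype_prod_eq_prod (μ := fun _ => μ) F

lemma aux_pi_eval {W : Type*} [MeasurableSpace W] (μ : Measure W) [IsProbabilityMeasure μ]
    {N : ℕ} (f : W → ℝ) (i : Fin N) :
    ∫ y : Fin N → W, f (y i) ∂(Measure.pi fun _ : Fin N => μ) = ∫ x, f x ∂μ := by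
  have h := aux_pi_prod μ (fun k => if k = i then f else fun _ => (1:ℝ))
  have hL : ∀ y : Fin N → W,
      (∏ k, (if k = i then f else fun _ => (1:ℝ)) (y k)) = f (y i) := by
    intro y
    rw [Finset.prod_congr rfl (fun k _ => by
      show (if k = i then f else fun _ => (1:ℝ)) (y k) = if k = i then f (y k) else 1
      split <;> rfl)]
    rw [Finset.prod_ite_eq' Finset.univ i (fun k => f (y k))]
    simp
  have hR : (∏ k : Fin N, ∫ x, (if k = i then f else fun _ => (1:ℝ)) x ∂μ)
      = ∫ x, f x ∂μ := by
    rw [Finset.prod_congr rfl (fun k _ => by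
      show (∫ x, (if k = i then f else fun _ => (1:ℝ)) x ∂μ)
        = if k = i then ∫ x, f x ∂μ else 1
      split
      · rfl
      · simp)]
    rw [Finset.prod_ite_eq' Finset.univ i (fun _ => ∫ x, f x ∂μ)]
    simp
  rw [← hR, ← h]
  exact integral_congr_ae (Filter.Eventually.of_forall (fun y => (hL y).symm))

lemma aux_pi_mul {W : Type*} [MeasurableSpace W] (μ : Measure W) [IsProbabilityMeasure μ]
    {N : ℕ} (f g : W → ℝ) {i j : Fin N} (hij : i ≠ j) :
    ∫ y : Fin N → W, f (y i) * g (y j) ∂(Measure.pi fun _ : Fin N => μ)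
      = (∫ x, f x ∂μ) * ∫ x, g x ∂μ := by
  have h := aux_pi_prod μ (fun k => if k = i then f else if k = j then g else fun _ => (1:ℝ))
  have hjmem : j ∈ Finset.univ.erase i := Finset.mem_erase.mpr ⟨hij.symm, Finset.mem_univ j⟩
  have hL : ∀ y : Fin N → W,
      (∏ k, (if k = i then f else if k = j then g else fun _ => (1:ℝ)) (y k))
        = f (y i) * g (y j) := by
    intro y
    rw [← Finset.mul_prod_erase Finset.univ _ (Finset.mem_univ i),
      ← Finset.mul_prod_erase _ _ hjmem]
    rw [if_pos rfl, if_neg hij.symm, if_pos rfl]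
    rw [Finset.prod_eq_one (fun k hk => by
      have hk2 := Finset.mem_erase.mp hk
      have hk3 := Finset.mem_erase.mp hk2.2
      rw [if_neg hk3.1, if_neg hk2.1])]
    ring
  have hR : (∏ k : Fin N, ∫ x, (if k = i then f else if k = j then g else fun _ => (1:ℝ)) x ∂μ)
      = (∫ x, f x ∂μ) * ∫ x, g x ∂μ := by
    rw [← Finset.mul_prod_erase Finset.univ _ (Finset.mem_univ i),
      ← Finset.mul_prod_erase _ _ hjmem]
    rw [if_pos rfl, if_neg hij.symm, if_pos rfl]
    rw [Finset.prod_eq_one (fun k hk => by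
      have hk2 := Finset.mem_erase.mp hk
      have hk3 := Finset.mem_erase.mp hk2.2
      rw [if_neg hk3.1, if_neg hk2.1]
      simp)]
    ring
  rw [← hR, ← h]
  exact integral_congr_ae (Filter.Eventually.of_forall (fun y => (hL y).symm))


lemma aux_meandev {W : Type*} [MeasurableSpace W] (μ : Measure W) [IsProbabilityMeasure μ]
    {g : W → ℝ} (hg : Measurable g) (hg0 : ∀ x, 0 ≤ g x) (hg1 : ∀ x, g x ≤ 1)
    {N : ℕ} (hN : 1 ≤ N) :
    ∫ y : Fin N → W, |(1 / (N:ℝ)) * ∑ i : Fin N, g (y i) - ∫ x, g x ∂μ|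
        ∂(Measure.pi fun _ : Fin N => μ)
      ≤ 1 / (2 * Real.sqrt N) := by
  set ν : Measure (Fin N → W) := Measure.pi fun _ : Fin N => μ with hν
  haveI : IsProbabilityMeasure ν := by rw [hν]; infer_instance
  have hNpos : (0:ℝ) < N := by exact_mod_cast hN
  set q : ℝ := ∫ x, g x ∂μ with hq
  have hgint : Integrable g μ := aux_bddInt μ hg.aestronglyMeasurable (M := 1)
    (fun x => abs_le.mpr ⟨by linarith [hg0 x], hg1 x⟩)
  have hq0 : 0 ≤ q := integral_nonneg hg0
  have hq1 : q ≤ 1 := by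
    calc q ≤ ∫ _x, (1:ℝ) ∂μ := integral_mono hgint (integrable_const 1) hg1
    _ = 1 := by simp
  set c : W → ℝ := fun x => g x - q with hc
  have hcmeas : Measurable c := hg.sub measurable_const
  have hcbd : ∀ x, |c x| ≤ 1 := by
    intro x; rw [abs_le]; constructor
    · simp only [hc]; linarith [hg0 x]
    · simp only [hc]; linarith [hg1 x]
  have hcint : Integrable c μ := aux_bddInt μ hcmeas.aestronglyMeasurable (M := 1) hcbd
  have hczero : ∫ x, c x ∂μ = 0 := by
    simp only [hc]
    rw [integral_sub hgint (integrable_const q)]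
    simp [hq]
  have hc2 : ∫ x, c x * c x ∂μ ≤ 1/4 := by
    have hexp : ∀ x, c x * c x = g x * g x - 2*q*(g x) + q*q := by intro x; simp only [hc]; ring
    have hint1 : Integrable (fun x => g x * g x) μ :=
      aux_bddInt μ (hg.mul hg).aestronglyMeasurable (M := 1)
        (fun x => by rw [abs_mul]; nlinarith [abs_nonneg (g x), abs_le.mpr ⟨by linarith [hg0 x], hg1 x⟩])
    have e1 : Integrable (fun a => g a * g a - 2*q*g a) μ := hint1.sub (hgint.const_mul (2*q))
    have : ∫ x, c x * c x ∂μ = (∫ x, g x * g x ∂μ) - 2*q*q + q*q := by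
      rw [integral_congr_ae (Filter.Eventually.of_forall hexp)]
      rw [integral_add e1 (integrable_const (q*q))]
      rw [integral_sub hint1 (hgint.const_mul (2*q))]
      rw [integral_const_mul]
      simp [hq]
    rw [this]
    have hgg : ∫ x, g x * g x ∂μ ≤ q := by
      rw [hq]
      exact integral_mono hint1 hgint (fun x => by nlinarith [hg0 x, hg1 x])
    nlinarith [sq_nonneg (2*q - 1)]
  set S : (Fin N → W) → ℝ := fun y => (1/(N:ℝ)) * ∑ i, c (y i) with hS
  have hSmeas : Measurable S :=
    (measurable_const.mul (Finset.measurable_sum _ (fun i _ =>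
      hcmeas.comp (measurable_pi_apply i))))
  have hSbd : ∀ y, |S y| ≤ 1 := by
    intro y
    rw [hS]
    simp only [abs_mul, abs_of_nonneg (by positivity : (0:ℝ) ≤ 1/(N:ℝ))]
    have : |∑ i : Fin N, c (y i)| ≤ (N:ℝ) := by
      calc |∑ i : Fin N, c (y i)| ≤ ∑ i : Fin N, |c (y i)| := Finset.abs_sum_le_sum_abs _ _
      _ ≤ ∑ _i : Fin N, (1:ℝ) := Finset.sum_le_sum (fun i _ => hcbd (y i))
      _ = (N:ℝ) := by simp
    calc 1/(N:ℝ) * |∑ i : Fin N, c (y i)| ≤ 1/(N:ℝ) * (N:ℝ) := by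
          exact mul_le_mul_of_nonneg_left this (by positivity)
    _ = 1 := by field_simp
  -- second moment
  have hterm : ∀ i j : Fin N, ∫ y, c (y i) * c (y j) ∂ν
      = if i = j then ∫ x, c x * c x ∂μ else 0 := by
    intro i j
    by_cases h : i = j
    · subst h
      rw [if_pos rfl]
      exact aux_pi_eval μ (fun x => c x * c x) i
    · rw [if_neg h, aux_pi_mul μ c c h, hczero, mul_zero]
  have htermint : ∀ i j : Fin N, Integrable (fun y => c (y i) * c (y j)) ν := by
    intro i j
    refine aux_bddInt ν ((((hcmeas.comp (measurable_pi_apply i))).mul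
      ((hcmeas.comp (measurable_pi_apply j)))).aestronglyMeasurable) (M := 1) ?_
    intro y; rw [abs_mul]
    nlinarith [hcbd (y i), hcbd (y j), abs_nonneg (c (y i)), abs_nonneg (c (y j))]
  have hES2 : ∫ y, S y * S y ∂ν ≤ 1/(4*(N:ℝ)) := by
    have hexp : ∀ y, S y * S y
        = (1/(N:ℝ))*(1/(N:ℝ)) * ∑ i : Fin N, ∑ j : Fin N, c (y i) * c (y j) := by
      intro y
      have hsm : (∑ i : Fin N, c (y i)) * (∑ j : Fin N, c (y j))
          = ∑ i : Fin N, ∑ j : Fin N, c (y i) * c (y j) :=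
        Finset.sum_mul_sum _ _ _ _
      simp only [hS]
      rw [mul_mul_mul_comm, hsm]
    rw [integral_congr_ae (Filter.Eventually.of_forall hexp)]
    rw [integral_const_mul]
    rw [integral_finset_sum _ (fun i _ => integrable_finset_sum _ (fun j _ => htermint i j))]
    have : ∀ i : Fin N, ∫ y, ∑ j : Fin N, c (y i) * c (y j) ∂ν
        = ∑ j : Fin N, ∫ y, c (y i) * c (y j) ∂ν :=
      fun i => integral_finset_sum _ (fun j _ => htermint i j)
    rw [Finset.sum_congr rfl (fun i _ => this i)]
    rw [Finset.sum_congr rfl (fun i _ => Finset.sum_congr rfl (fun j _ => hterm i j))]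
    have hsum : ∀ i : Fin N, ∑ j : Fin N, (if i = j then ∫ x, c x * c x ∂μ else 0)
        = ∫ x, c x * c x ∂μ := by
      intro i
      rw [Finset.sum_ite_eq Finset.univ i (fun _ => ∫ x, c x * c x ∂μ)]
      simp
    rw [Finset.sum_congr rfl (fun i _ => hsum i), Finset.sum_const]
    simp only [Finset.card_univ, Fintype.card_fin, nsmul_eq_mul]
    calc (1/(N:ℝ))*(1/(N:ℝ)) * ((N:ℝ) * ∫ x, c x * c x ∂μ)
        ≤ (1/(N:ℝ))*(1/(N:ℝ)) * ((N:ℝ) * (1/4)) := by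
          apply mul_le_mul_of_nonneg_left _ (by positivity)
          exact mul_le_mul_of_nonneg_left hc2 (by positivity)
    _ = 1/(4*(N:ℝ)) := by field_simp
  -- from second moment to first absolute moment
  have hsqrtN : (0:ℝ) < Real.sqrt N := Real.sqrt_pos.mpr hNpos
  set t : ℝ := 1/(2*Real.sqrt N) with ht
  have htpos : 0 < t := by positivity
  have ht2 : t * t = 1/(4*(N:ℝ)) := by
    have h4 : (2*Real.sqrt N) * (2*Real.sqrt N) = 4*(N:ℝ) := by
      nlinarith [Real.mul_self_sqrt hNpos.le]
    rw [ht, div_mul_div_comm, one_mul, h4]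
  have hptwise : ∀ y, |S y| ≤ (S y * S y + t*t)/(2*t) := by
    intro y
    rw [le_div_iff₀ (by positivity)]
    nlinarith [sq_nonneg (|S y| - t), sq_abs (S y)]
  have hSint : Integrable (fun y => |S y|) ν :=
    aux_bddInt ν hSmeas.abs.aestronglyMeasurable (M := 1) (fun y => by rw [abs_abs]; exact hSbd y)
  have hS2int : Integrable (fun y => S y * S y) ν :=
    aux_bddInt ν (hSmeas.mul hSmeas).aestronglyMeasurable (M := 1)
      (fun y => by rw [abs_mul]; nlinarith [hSbd y, abs_nonneg (S y)])
  have hEabs : ∫ y, |S y| ∂ν ≤ t := by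
    calc ∫ y, |S y| ∂ν ≤ ∫ y, (S y * S y + t*t)/(2*t) ∂ν := by
          apply integral_mono hSint _ hptwise
          exact (hS2int.add (integrable_const _)).div_const _
    _ = ((∫ y, S y * S y ∂ν) + t*t)/(2*t) := by
          rw [integral_div, integral_add hS2int (integrable_const _)]
          simp
    _ ≤ (1/(4*(N:ℝ)) + t*t)/(2*t) := by
          apply div_le_div_of_nonneg_right _ (by positivity)
          · linarith [hES2]
    _ = t := by rw [← ht2]; field_simp; ring
  -- identify S with the statement
  have hid : ∀ y : Fin N → W, (1/(N:ℝ)) * ∑ i : Fin N, g (y i) - q = S y := by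
    intro y
    rw [hS]
    simp only [hc]
    rw [Finset.sum_sub_distrib, Finset.sum_const]
    simp only [Finset.card_univ, Fintype.card_fin, nsmul_eq_mul]
    field_simp
  calc ∫ y, |(1/(N:ℝ)) * ∑ i : Fin N, g (y i) - q| ∂ν = ∫ y, |S y| ∂ν := by
        refine integral_congr_ae (Filter.Eventually.of_forall (fun y => ?_))
        dsimp only
        rw [hid y]
  _ ≤ t := hEabs


lemma aux_key {W : Type*} [MeasurableSpace W] (μ : Measure W) [IsProbabilityMeasure μ]
    {η : W → ℝ} (hη : Measurable η) (hη01 : ∀ x, η x ∈ Icc (0:ℝ) 1)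
    {p θstar : ℝ} (hp : 0 < p) (hpI : p ≤ ∫ x, η x ∂μ) (hθs : θstar ∈ Icc (0:ℝ) 1)
    (hθeq : θstar * ∫ x, η x ∂μ = ∫ x, max (η x - θstar) 0 ∂μ)
    {N : ℕ} (hN : 1 ≤ N) (e h : Fin N → ℝ)
    (he01 : ∀ i, e i ∈ Icc (0:ℝ) 1) (hh01 : ∀ i, h i ∈ Icc (0:ℝ) 1)
    {θh : ℝ} (hθh : θh ∈ Icc (0:ℝ) 1)
    (heq : θh * ((1/(N:ℝ)) * ∑ i : Fin N, h i) = (1/(N:ℝ)) * ∑ i : Fin N, max (h i - θh) 0) :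
    p * |θstar - θh| ≤
      |(1/(N:ℝ)) * ∑ i : Fin N, e i - ∫ x, η x ∂μ|
      + 2 * ((1/(N:ℝ)) * ∑ i : Fin N, |h i - e i|)
      + ∫ s in Set.Ioc (0:ℝ) 1,
          |(μ {x | s < η x}).toReal - (1/(N:ℝ)) * ∑ i : Fin N, (if s < e i then (1:ℝ) else 0)| := by
  haveI : IsFiniteMeasure (volume.restrict (Set.Ioc (0:ℝ) 1)) :=
    ⟨by rw [Measure.restrict_apply_univ]; simp [Real.volume_Ioc]⟩
  have hNpos : (0:ℝ) < N := by exact_mod_cast hN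
  set I : ℝ := ∫ x, η x ∂μ with hI
  set φ : ℝ → ℝ := fun θ => ∫ x, max (η x - θ) 0 ∂μ with hφ
  have hφmeas : ∀ θ : ℝ, Measurable (fun x => max (η x - θ) 0) :=
    fun θ => (hη.sub measurable_const).max measurable_const
  have hφint : ∀ θ : ℝ, 0 ≤ θ → Integrable (fun x => max (η x - θ) 0) μ := by
    intro θ hθ
    refine aux_bddInt μ (hφmeas θ).aestronglyMeasurable (M := 1) (fun x => ?_)
    rw [abs_of_nonneg (le_max_right _ _)]
    exact max_le (by linarith [(hη01 x).2]) (by norm_num)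
  have hmono : ∀ u v : ℝ, 0 ≤ u → u ≤ v → p * (v - u) ≤ (v * I - φ v) - (u * I - φ u) := by
    intro u v hu huv
    have hφle : φ v ≤ φ u := by
      apply integral_mono (hφint v (le_trans hu huv)) (hφint u hu)
      intro x
      exact max_le_max (by linarith) le_rfl
    have h2 : p * (v - u) ≤ I * (v - u) := by
      apply mul_le_mul_of_nonneg_right hpI (by linarith)
    nlinarith
  set θh' := θh with hθh'
  have hkey1 : p * |θstar - θh| ≤ |θh * I - φ θh| := by
    rcases le_total θstar θh with hc | hc
    · have := hmono θstar θh hθs.1 hc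
      rw [abs_sub_comm, abs_of_nonneg (by linarith)]
      have hz : θstar * I - φ θstar = 0 := by simp only [hφ]; rw [← hθeq]; ring
      calc p * (θh - θstar) ≤ (θh * I - φ θh) - (θstar * I - φ θstar) := this
      _ = θh * I - φ θh := by rw [hz]; ring
      _ ≤ |θh * I - φ θh| := le_abs_self _
    · have := hmono θh θstar hθh.1 hc
      rw [abs_of_nonneg (by linarith)]
      have hz : θstar * I - φ θstar = 0 := by simp only [hφ]; rw [← hθeq]; ring
      calc p * (θstar - θh) ≤ (θstar * I - φ θstar) - (θh * I - φ θh) := this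
      _ = -(θh * I - φ θh) := by rw [hz]; ring
      _ ≤ |θh * I - φ θh| := neg_le_abs _
  set m : ℝ := (1/(N:ℝ)) * ∑ i : Fin N, h i with hm
  set Sh : ℝ := (1/(N:ℝ)) * ∑ i : Fin N, max (h i - θh) 0 with hSh
  set φhat : ℝ := (1/(N:ℝ)) * ∑ i : Fin N, max (e i - θh) 0 with hφhat
  set W2 : ℝ := (1/(N:ℝ)) * ∑ i : Fin N, |h i - e i| with hW2
  set Gs : ℝ → ℝ := fun s => (μ {x | s < η x}).toReal with hGs
  set Gh : ℝ → ℝ := fun s => (1/(N:ℝ)) * ∑ i : Fin N, (if s < e i then (1:ℝ) else 0) with hGh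
  -- decomposition
  have hdecomp : |θh * I - φ θh| ≤ |I - m| + |φhat - Sh| + |φ θh - φhat| := by
    have : θh * I - φ θh = θh * (I - m) + (Sh - φhat) + (φhat - φ θh) := by
      rw [← heq]; ring
    rw [this]
    calc |θh * (I - m) + (Sh - φhat) + (φhat - φ θh)|
        ≤ |θh * (I - m) + (Sh - φhat)| + |φhat - φ θh| := abs_add_le _ _
      _ ≤ |θh * (I - m)| + |Sh - φhat| + |φhat - φ θh| := by
          have := abs_add_le (θh * (I - m)) (Sh - φhat)
          linarith
      _ ≤ |I - m| + |φhat - Sh| + |φ θh - φhat| := by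
          rw [abs_mul, abs_sub_comm Sh φhat, abs_sub_comm (φ θh) φhat]
          have h1 : |θh| * |I - m| ≤ 1 * |I - m| := by
            apply mul_le_mul_of_nonneg_right _ (abs_nonneg _)
            rw [abs_of_nonneg hθh.1]; exact hθh.2
          linarith
  -- (a)
  have ha : |I - m| ≤ |(1/(N:ℝ)) * ∑ i : Fin N, e i - I| + W2 := by
    have h1 : |I - m| ≤ |I - (1/(N:ℝ)) * ∑ i : Fin N, e i|
        + |(1/(N:ℝ)) * ∑ i : Fin N, e i - m| := abs_sub_le _ _ _
    have h2 : |(1/(N:ℝ)) * ∑ i : Fin N, e i - m| ≤ W2 := by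
      rw [hm, hW2, ← mul_sub, ← Finset.sum_sub_distrib, abs_mul,
        abs_of_nonneg (by positivity : (0:ℝ) ≤ 1/(N:ℝ))]
      apply mul_le_mul_of_nonneg_left _ (by positivity)
      calc |∑ i : Fin N, (e i - h i)| ≤ ∑ i : Fin N, |e i - h i| := Finset.abs_sum_le_sum_abs _ _
        _ = ∑ i : Fin N, |h i - e i| := by
            exact Finset.sum_congr rfl (fun i _ => abs_sub_comm _ _)
    rw [abs_sub_comm I ((1/(N:ℝ)) * ∑ i : Fin N, e i)] at h1
    linarith
  -- (b)
  have hb : |φhat - Sh| ≤ W2 := by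
    rw [hφhat, hSh, hW2, ← mul_sub, ← Finset.sum_sub_distrib, abs_mul,
      abs_of_nonneg (by positivity : (0:ℝ) ≤ 1/(N:ℝ))]
    apply mul_le_mul_of_nonneg_left _ (by positivity)
    calc |∑ i : Fin N, (max (e i - θh) 0 - max (h i - θh) 0)|
        ≤ ∑ i : Fin N, |max (e i - θh) 0 - max (h i - θh) 0| := Finset.abs_sum_le_sum_abs _ _
      _ ≤ ∑ i : Fin N, |h i - e i| := by
          apply Finset.sum_le_sum
          intro i _
          calc |max (e i - θh) 0 - max (h i - θh) 0| ≤ |(e i - θh) - (h i - θh)| :=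
                abs_max_sub_max_le_abs _ _ _
            _ = |h i - e i| := by rw [sub_sub_sub_cancel_right, abs_sub_comm]
  -- (c)
  have hGs01 : ∀ s, 0 ≤ Gs s ∧ Gs s ≤ 1 := by
    intro s
    constructor
    · exact ENNReal.toReal_nonneg
    · rw [hGs]
      calc (μ {x | s < η x}).toReal ≤ (μ Set.univ).toReal :=
            ENNReal.toReal_mono (measure_ne_top _ _) (measure_mono (Set.subset_univ _))
        _ = 1 := by simp
  have hGh01 : ∀ s, 0 ≤ Gh s ∧ Gh s ≤ 1 := by
    intro s
    constructor
    · rw [hGh]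
      apply mul_nonneg (by positivity)
      apply Finset.sum_nonneg; intro i _; split <;> norm_num
    · rw [hGh]
      calc (1/(N:ℝ)) * ∑ i : Fin N, (if s < e i then (1:ℝ) else 0)
          ≤ (1/(N:ℝ)) * ∑ _i : Fin N, (1:ℝ) := by
            apply mul_le_mul_of_nonneg_left _ (by positivity)
            apply Finset.sum_le_sum; intro i _; split <;> norm_num
        _ = 1 := by simp; field_simp
  have hGsmeas : Measurable Gs := by
    have : Antitone Gs := by
      intro s t hst
      rw [hGs]
      apply ENNReal.toReal_le_toReal (measure_ne_top _ _) (measure_ne_top _ _) |>.mpr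
      apply measure_mono
      intro x hx
      exact lt_of_le_of_lt hst hx
    exact this.measurable
  have hGhmeas : Measurable Gh := by
    apply Measurable.const_mul
    apply Finset.measurable_sum
    intro i _
    have : (fun s => if s < e i then (1:ℝ) else 0)
        = Set.indicator (Set.Iio (e i)) (fun _ => (1:ℝ)) := by
      funext s; by_cases hs : s < e i
      · simp [Set.indicator, hs]
      · simp [Set.indicator, hs]
    rw [this]
    exact measurable_const.indicator measurableSet_Iio
  have hrepφ : φ θh = ∫ s in Set.Ioc (0:ℝ) 1, (if θh < s then Gs s else 0) := by
    rw [hφ]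
    exact aux_rep μ hη (fun x => (hη01 x).2) hθh.1
  have hrepφhat : φhat = ∫ s in Set.Ioc (0:ℝ) 1, (if θh < s then Gh s else 0) := by
    have h_i : ∀ i : Fin N, max (e i - θh) 0
        = ∫ s in Set.Ioc (0:ℝ) 1, (if θh < s ∧ s < e i then (1:ℝ) else 0) :=
      fun i => (aux_L1 θh (e i) hθh.1 (he01 i).2).symm
    have hintterm : ∀ i : Fin N,
        Integrable (fun s => if θh < s ∧ s < e i then (1:ℝ) else 0)
          (volume.restrict (Set.Ioc (0:ℝ) 1)) := by
      intro i
      refine aux_bddInt _ ?_ (M := 1) (fun s => by split <;> simp)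
      refine (Measurable.ite ?_ measurable_const measurable_const).aestronglyMeasurable
      exact (measurableSet_Ioi.inter measurableSet_Iio :
        MeasurableSet ({s : ℝ | θh < s} ∩ {s | s < e i}))
    rw [hφhat]
    rw [Finset.sum_congr rfl (fun i _ => h_i i)]
    rw [← integral_finset_sum _ (fun i _ => hintterm i)]
    rw [← integral_const_mul]
    apply integral_congr_ae (Filter.Eventually.of_forall ?_)
    intro s
    by_cases hs : θh < s
    · simp only [hs, true_and, if_true, hGh]
    · simp only [hs, false_and, if_false, if_neg hs]
      simp
  have hintGs : Integrable (fun s => if θh < s then Gs s else 0)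
      (volume.restrict (Set.Ioc (0:ℝ) 1)) := by
    refine aux_bddInt _ ((hGsmeas.ite (measurableSet_Ioi) measurable_const
      : Measurable fun s => if θh < s then Gs s else 0)).aestronglyMeasurable
      (M := 1) (fun s => ?_)
    split
    · rw [abs_of_nonneg (hGs01 _).1]; exact (hGs01 _).2
    · simp
  have hintGh : Integrable (fun s => if θh < s then Gh s else 0)
      (volume.restrict (Set.Ioc (0:ℝ) 1)) := by
    refine aux_bddInt _ ((hGhmeas.ite (measurableSet_Ioi) measurable_const
      : Measurable fun s => if θh < s then Gh s else 0)).aestronglyMeasurable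
      (M := 1) (fun s => ?_)
    split
    · rw [abs_of_nonneg (hGh01 _).1]; exact (hGh01 _).2
    · simp
  have hintabs : Integrable (fun s => |Gs s - Gh s|) (volume.restrict (Set.Ioc (0:ℝ) 1)) := by
    refine aux_bddInt _ ((hGsmeas.sub hGhmeas).abs.aestronglyMeasurable) (M := 2) (fun s => ?_)
    rw [abs_abs, abs_sub_comm]
    have := (hGs01 s); have := (hGh01 s)
    rw [abs_le]; constructor <;> [linarith [ (hGs01 s).1, (hGs01 s).2, (hGh01 s).1, (hGh01 s).2 ];
      linarith [ (hGs01 s).1, (hGs01 s).2, (hGh01 s).1, (hGh01 s).2 ]]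
  have hc : |φ θh - φhat| ≤ ∫ s in Set.Ioc (0:ℝ) 1, |Gs s - Gh s| := by
    rw [hrepφ, hrepφhat, ← integral_sub hintGs hintGh]
    calc |∫ s in Set.Ioc (0:ℝ) 1, ((if θh < s then Gs s else 0) - (if θh < s then Gh s else 0))|
        ≤ ∫ s in Set.Ioc (0:ℝ) 1,
            |(if θh < s then Gs s else 0) - (if θh < s then Gh s else 0)| := by
          have := norm_integral_le_integral_norm (μ := volume.restrict (Set.Ioc (0:ℝ) 1))
            (fun s => (if θh < s then Gs s else 0) - (if θh < s then Gh s else 0))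
          simpa [Real.norm_eq_abs] using this
      _ ≤ ∫ s in Set.Ioc (0:ℝ) 1, |Gs s - Gh s| := by
          apply integral_mono _ hintabs
          · intro s
            by_cases hs : θh < s
            · simp [hs]
            · simp [hs, abs_nonneg]
          · exact (hintGs.sub hintGh).abs
  -- combine
  calc p * |θstar - θh| ≤ |θh * I - φ θh| := hkey1
    _ ≤ |I - m| + |φhat - Sh| + |φ θh - φhat| := hdecomp
    _ ≤ (|(1/(N:ℝ)) * ∑ i : Fin N, e i - I| + W2) + W2
        + ∫ s in Set.Ioc (0:ℝ) 1, |Gs s - Gh s| := by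
        have := ha; have := hb; have := hc
        linarith
    _ = |(1/(N:ℝ)) * ∑ i : Fin N, e i - I| + 2 * W2
        + ∫ s in Set.Ioc (0:ℝ) 1, |Gs s - Gh s| := by ring


lemma aux_conc {W : Type*} [MeasurableSpace W] (μ : Measure W) [IsProbabilityMeasure μ]
    {Ω : Type} [MeasurableSpace Ω] (Pn : Measure Ω) [IsProbabilityMeasure Pn]
    {η : W → ℝ} (hη : Measurable η) (hη01 : ∀ x, η x ∈ Icc (0:ℝ) 1)
    {ηhat : Ω → W → ℝ} (hηhatm : Measurable (fun q : Ω × W => ηhat q.1 q.2))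
    (hηhat01 : ∀ ω x, ηhat ω x ∈ Icc (0:ℝ) 1)
    {C1 C2 a : ℝ} (hC1 : 0 < C1) (hC2 : 0 < C2) (ha : 0 < a)
    (hconc : ∀ t > (0:ℝ), ∀ᵐ x ∂μ,
      (Pn {ω | t ≤ |ηhat ω x - η x|}).toReal ≤ C1 * Real.exp (-C2 * a * t ^ 2)) :
    ∫ q, |ηhat q.1 q.2 - η q.2| ∂(Pn.prod μ) ≤ C1 * Real.sqrt (Real.pi / (C2 * a)) := by
  set Z : W × Ω → ℝ := fun w => |ηhat w.2 w.1 - η w.1| with hZ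
  have hZmeas : Measurable Z :=
    ((hηhatm.comp measurable_swap).sub (hη.comp measurable_fst)).abs
  have hZ01 : ∀ w, 0 ≤ Z w ∧ Z w ≤ 1 := by
    intro w
    refine ⟨abs_nonneg _, ?_⟩
    simp only [hZ]
    rw [abs_le]
    constructor
    · have h1 := (hηhat01 w.2 w.1).1; have h2 := (hη01 w.1).2; linarith
    · have h1 := (hηhat01 w.2 w.1).2; have h2 := (hη01 w.1).1; linarith
  set ρ : Measure (W × Ω) := μ.prod Pn with hρ
  have hstep0 : ∫ q, |ηhat q.1 q.2 - η q.2| ∂(Pn.prod μ) = ∫ w, Z w ∂ρ := by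
    rw [hρ]
    exact (integral_prod_swap (fun q : Ω × W => |ηhat q.1 q.2 - η q.2|)).symm
  have hstep1 : ∫ w, Z w ∂ρ
      = ∫ s in Set.Ioc (0:ℝ) 1, (if (0:ℝ) < s then (ρ {w | s < Z w}).toReal else 0) := by
    rw [show (fun w => Z w) = fun w => max (Z w - 0) 0 by
      funext w; rw [sub_zero, max_eq_left (hZ01 w).1]]
    exact aux_rep ρ hZmeas (fun w => (hZ01 w).2) le_rfl
  set B : ℝ → ℝ := fun s => C1 * Real.exp (-C2 * a * s ^ 2) with hB
  have hB0 : ∀ s, 0 ≤ B s := fun s => le_of_lt (by positivity)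
  have hstep2 : ∀ s : ℝ, 0 < s → (ρ {w | s < Z w}).toReal ≤ B s := by
    intro s hs
    have hSle : MeasurableSet {w : W × Ω | s ≤ Z w} := hZmeas measurableSet_Ici
    have hsub : ρ {w | s < Z w} ≤ ρ {w | s ≤ Z w} := by
      apply measure_mono
      intro w hw
      simp only [Set.mem_setOf_eq] at *
      exact le_of_lt hw
    have hprod : ρ {w : W × Ω | s ≤ Z w} = ∫⁻ x, Pn {ω | s ≤ |ηhat ω x - η x|} ∂μ := by
      rw [hρ, Measure.prod_apply hSle]
      rfl
    have hae := hconc s hs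
    have hlin : ∫⁻ x, Pn {ω | s ≤ |ηhat ω x - η x|} ∂μ ≤ ENNReal.ofReal (B s) := by
      calc ∫⁻ x, Pn {ω | s ≤ |ηhat ω x - η x|} ∂μ
          ≤ ∫⁻ _x, ENNReal.ofReal (B s) ∂μ := by
            apply lintegral_mono_ae
            filter_upwards [hae] with x hx
            exact (ENNReal.le_ofReal_iff_toReal_le (measure_ne_top _ _) (hB0 s)).mpr hx
        _ = ENNReal.ofReal (B s) := by simp
    calc (ρ {w | s < Z w}).toReal ≤ (ρ {w | s ≤ Z w}).toReal :=
          ENNReal.toReal_mono (measure_ne_top _ _) hsub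
      _ ≤ B s := by
          apply ENNReal.toReal_le_of_le_ofReal (hB0 s)
          rw [hprod]
          exact hlin
  have hBint : Integrable B := by
    have : Integrable (fun s : ℝ => Real.exp (-(C2*a) * s ^ 2)) :=
      integrable_exp_neg_mul_sq (by positivity)
    have h2 := this.const_mul C1
    refine h2.congr (Filter.Eventually.of_forall (fun s => ?_))
    rw [hB]
    norm_num [neg_mul]
  have hstep3 : ∫ s in Set.Ioc (0:ℝ) 1, (if (0:ℝ) < s then (ρ {w | s < Z w}).toReal else 0)
      ≤ ∫ s in Set.Ioc (0:ℝ) 1, B s := by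
    apply integral_mono_of_nonneg
    · apply Filter.Eventually.of_forall
      intro s
      simp only [Pi.zero_apply]
      split <;> simp [ENNReal.toReal_nonneg]
    · exact hBint.restrict
    · rw [Filter.EventuallyLE, ae_restrict_iff' measurableSet_Ioc]
      apply Filter.Eventually.of_forall
      intro s hs
      rw [if_pos hs.1]
      exact hstep2 s hs.1
  have hstep4 : ∫ s in Set.Ioc (0:ℝ) 1, B s ≤ C1 * Real.sqrt (Real.pi / (C2 * a)) := by
    calc ∫ s in Set.Ioc (0:ℝ) 1, B s ≤ ∫ s, B s :=
          setIntegral_le_integral hBint (Filter.Eventually.of_forall (fun s => hB0 s))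
      _ = C1 * Real.sqrt (Real.pi / (C2 * a)) := by
          rw [hB]
          have : ∀ s : ℝ, C1 * Real.exp (-C2 * a * s ^ 2)
              = C1 * Real.exp (-(C2 * a) * s ^ 2) := by intro s; ring_nf
          rw [integral_congr_ae (Filter.Eventually.of_forall this)]
          rw [integral_const_mul, integral_gaussian]
  rw [hstep0, hstep1]
  exact le_trans hstep3 hstep4


set_option maxHeartbeats 1600000 in

theorem statement13 (C0 C1 C2 p : ℝ) (hC0 : 0 < C0) (hC1 : 0 < C1)
    (hC2 : 0 < C2) (hp : 0 < p) :
    ∃ C > (0 : ℝ), ∀ (d : ℕ) (α δ0 : ℝ), 0 < α → δ0 ∈ Ioc (0 : ℝ) (1 / 12) →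
      ∀ (μ : Measure (EuclideanSpace ℝ (Fin d))) (_ : IsProbabilityMeasure μ)
        (Ω : Type) (_ : MeasurableSpace Ω) (Pn : Measure Ω)
        (_ : IsProbabilityMeasure Pn)
        (η : EuclideanSpace ℝ (Fin d) → ℝ)
        (ηhat : Ω → EuclideanSpace ℝ (Fin d) → ℝ)
        (θstar a : ℝ) (N : ℕ)
        (θhat : Ω × (Fin N → EuclideanSpace ℝ (Fin d)) → ℝ),
      0 < a → 1 ≤ N →
      Measurable η → (∀ x, η x ∈ Icc (0 : ℝ) 1) →
      Measurable (fun z : Ω × EuclideanSpace ℝ (Fin d) => ηhat z.1 z.2) →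
      (∀ ω x, ηhat ω x ∈ Icc (0 : ℝ) 1) →
      Measurable θhat →
      p ≤ ∫ x, η x ∂μ →
      θstar ∈ Icc (0 : ℝ) 1 →
      θstar * ∫ x, η x ∂μ = ∫ x, max (η x - θstar) 0 ∂μ →
      (∀ δ ∈ Ioc (0 : ℝ) δ0,
        (μ {x | 0 < |η x - θstar| ∧ |η x - θstar| ≤ δ}).toReal ≤ C0 * δ ^ α) →
      (∀ t > (0 : ℝ), ∀ᵐ x ∂μ,
        (Pn {ω | t ≤ |ηhat ω x - η x|}).toReal ≤ C1 * Real.exp (-C2 * a * t ^ 2)) →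
      (∀ z : Ω × (Fin N → EuclideanSpace ℝ (Fin d)), θhat z ∈ Icc (0 : ℝ) 1) →
      (∀ z : Ω × (Fin N → EuclideanSpace ℝ (Fin d)),
        θhat z * ((1 / (N : ℝ)) * ∑ i : Fin N, ηhat z.1 (z.2 i)) =
          (1 / (N : ℝ)) * ∑ i : Fin N, max (ηhat z.1 (z.2 i) - θhat z) 0) →
      ∫ z, |θstar - θhat z| ∂(Pn.prod (Measure.pi fun _ : Fin N => μ)) ≤
        C * (a ^ (-(1 : ℝ) / 2) + (N : ℝ) ^ (-(1 : ℝ) / 2)) := by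
  set K : ℝ := C1 * Real.sqrt Real.pi / Real.sqrt C2 with hK
  have hKpos : 0 < K := by
    rw [hK]
    have := Real.sqrt_pos.mpr Real.pi_pos
    have := Real.sqrt_pos.mpr hC2
    positivity
  refine ⟨(1 + 2*K)/p, by positivity, ?_⟩
  intro d α δ0 hα hδ0 μ hμi Ω mΩ Pn hPni η ηhat θstar a N θhat ha hN hη hη01 hηhatm hηhat01
    hθhatmeas hpI hθstar hθeq hmargin hconc hθhat01 hθhateq
  haveI := hμi; haveI := hPni
  set ν : Measure (Fin N → EuclideanSpace ℝ (Fin d)) := Measure.pi fun _ => μ with hν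
  haveI : IsProbabilityMeasure ν := by rw [hν]; infer_instance
  haveI : IsFiniteMeasure (volume.restrict (Set.Ioc (0:ℝ) 1)) :=
    ⟨by rw [Measure.restrict_apply_univ]; simp [Real.volume_Ioc]⟩
  have hNpos : (0:ℝ) < N := by exact_mod_cast hN
  have hsqrtN : (0:ℝ) < Real.sqrt N := Real.sqrt_pos.mpr hNpos
  have hsqrta : (0:ℝ) < Real.sqrt a := Real.sqrt_pos.mpr ha
  -- basic measurability
  have hη_i : ∀ i : Fin N, Measurable (fun z : Ω × (Fin N → EuclideanSpace ℝ (Fin d)) =>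
      η (z.2 i)) := fun i => hη.comp ((measurable_pi_apply i).comp measurable_snd)
  have hηhat_i : ∀ i : Fin N, Measurable (fun z : Ω × (Fin N → EuclideanSpace ℝ (Fin d)) =>
      ηhat z.1 (z.2 i)) := fun i =>
    hηhatm.comp (measurable_fst.prodMk ((measurable_pi_apply i).comp measurable_snd))
  -- abbreviations
  set I : ℝ := ∫ x, η x ∂μ with hI
  set Gs : ℝ → ℝ := fun s => (μ {x | s < η x}).toReal with hGs
  set Gh : (Fin N → EuclideanSpace ℝ (Fin d)) → ℝ → ℝ :=
    fun y s => (1/(N:ℝ)) * ∑ i : Fin N, (if s < η (y i) then (1:ℝ) else 0) with hGh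
  set W1 : (Fin N → EuclideanSpace ℝ (Fin d)) → ℝ :=
    fun y => |(1/(N:ℝ)) * ∑ i : Fin N, η (y i) - I| with hW1
  set W2 : Ω × (Fin N → EuclideanSpace ℝ (Fin d)) → ℝ :=
    fun z => (1/(N:ℝ)) * ∑ i : Fin N, |ηhat z.1 (z.2 i) - η (z.2 i)| with hW2
  set W3 : (Fin N → EuclideanSpace ℝ (Fin d)) → ℝ :=
    fun y => ∫ s in Set.Ioc (0:ℝ) 1, |Gs s - Gh y s| with hW3
  -- pointwise key bound
  have key : ∀ z, p * |θstar - θhat z| ≤ W1 z.2 + 2 * W2 z + W3 z.2 := by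
    intro z
    have := aux_key μ hη hη01 hp hpI hθstar hθeq hN
      (fun i => η (z.2 i)) (fun i => ηhat z.1 (z.2 i))
      (fun i => hη01 _) (fun i => hηhat01 _ _) (hθhat01 z) (hθhateq z)
    simpa [hW1, hW2, hW3, hGs, hGh, hI] using this
  -- Gs, Gh properties
  have hGs01 : ∀ s, 0 ≤ Gs s ∧ Gs s ≤ 1 := by
    intro s
    refine ⟨ENNReal.toReal_nonneg, ?_⟩
    rw [hGs]
    calc (μ {x | s < η x}).toReal ≤ (μ Set.univ).toReal :=
          ENNReal.toReal_mono (measure_ne_top _ _) (measure_mono (Set.subset_univ _))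
      _ = 1 := by simp
  have hGh01 : ∀ y s, 0 ≤ Gh y s ∧ Gh y s ≤ 1 := by
    intro y s
    constructor
    · apply mul_nonneg (by positivity)
      apply Finset.sum_nonneg; intro i _; split <;> norm_num
    · calc (1/(N:ℝ)) * ∑ i : Fin N, (if s < η (y i) then (1:ℝ) else 0)
          ≤ (1/(N:ℝ)) * ∑ _i : Fin N, (1:ℝ) := by
            apply mul_le_mul_of_nonneg_left _ (by positivity)
            apply Finset.sum_le_sum; intro i _; split <;> norm_num
        _ = 1 := by field_simp; simp
  have hGsmeas : Measurable Gs := by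
    have : Antitone Gs := by
      intro s t hst
      apply ENNReal.toReal_mono (measure_ne_top _ _)
      apply measure_mono
      intro x hx
      exact lt_of_le_of_lt hst hx
    exact this.measurable
  have hGhjoint : Measurable (fun q : (Fin N → EuclideanSpace ℝ (Fin d)) × ℝ => Gh q.1 q.2) := by
    apply Measurable.const_mul
    apply Finset.measurable_sum
    intro i _
    exact Measurable.ite
      (measurableSet_lt measurable_snd (hη.comp ((measurable_pi_apply i).comp measurable_fst)))
      measurable_const measurable_const
  -- integrability of W1, W2, W3 over the product measure
  have hW1meas : Measurable (fun z : Ω × (Fin N → EuclideanSpace ℝ (Fin d)) => W1 z.2) := by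
    apply Measurable.abs
    exact (measurable_const.mul (Finset.measurable_sum _ (fun i _ => hη_i i))).sub
      measurable_const
  have hW1bd : ∀ z : Ω × (Fin N → EuclideanSpace ℝ (Fin d)), |W1 z.2| ≤ 2 := by
    intro z
    rw [hW1]
    rw [abs_abs]
    have h1 : |(1/(N:ℝ)) * ∑ i : Fin N, η (z.2 i)| ≤ 1 := by
      rw [abs_mul, abs_of_nonneg (by positivity : (0:ℝ) ≤ 1/(N:ℝ))]
      calc (1/(N:ℝ)) * |∑ i : Fin N, η (z.2 i)|
          ≤ (1/(N:ℝ)) * (N:ℝ) := by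
            apply mul_le_mul_of_nonneg_left _ (by positivity)
            calc |∑ i : Fin N, η (z.2 i)| ≤ ∑ i : Fin N, |η (z.2 i)| :=
                  Finset.abs_sum_le_sum_abs _ _
              _ ≤ ∑ _i : Fin N, (1:ℝ) := Finset.sum_le_sum (fun i _ => abs_le.mpr
                  ⟨by linarith [(hη01 (z.2 i)).1], (hη01 (z.2 i)).2⟩)
              _ = (N:ℝ) := by simp
        _ = 1 := by field_simp
    have h2 : |I| ≤ 1 := by
      rw [hI, abs_le]
      constructor
      · have : (0:ℝ) ≤ ∫ x, η x ∂μ := integral_nonneg (fun x => (hη01 x).1)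
        linarith
      · calc ∫ x, η x ∂μ ≤ ∫ _x, (1:ℝ) ∂μ := by
              apply integral_mono _ (integrable_const 1) (fun x => (hη01 x).2)
              exact aux_bddInt μ hη.aestronglyMeasurable (M := 1)
                (fun x => abs_le.mpr ⟨by linarith [(hη01 x).1], (hη01 x).2⟩)
          _ = 1 := by simp
    calc |(1/(N:ℝ)) * ∑ i : Fin N, η (z.2 i) - I|
        ≤ |(1/(N:ℝ)) * ∑ i : Fin N, η (z.2 i)| + |I| := abs_sub _ _
      _ ≤ 2 := by linarith
  have hW2meas : Measurable W2 := by
    apply Measurable.const_mul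
    apply Finset.measurable_sum
    intro i _
    exact ((hηhat_i i).sub (hη_i i)).abs
  have hW2bd : ∀ z, |W2 z| ≤ 1 := by
    intro z
    rw [hW2]
    have hnn : (0:ℝ) ≤ (1/(N:ℝ)) * ∑ i : Fin N, |ηhat z.1 (z.2 i) - η (z.2 i)| := by
      apply mul_nonneg (by positivity)
      exact Finset.sum_nonneg (fun i _ => abs_nonneg _)
    rw [abs_of_nonneg hnn]
    calc (1/(N:ℝ)) * ∑ i : Fin N, |ηhat z.1 (z.2 i) - η (z.2 i)|
        ≤ (1/(N:ℝ)) * ∑ _i : Fin N, (1:ℝ) := by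
          apply mul_le_mul_of_nonneg_left _ (by positivity)
          apply Finset.sum_le_sum
          intro i _
          rw [abs_le]
          constructor
          · have := (hηhat01 z.1 (z.2 i)).1; have := (hη01 (z.2 i)).2; linarith
          · have := (hηhat01 z.1 (z.2 i)).2; have := (hη01 (z.2 i)).1; linarith
      _ = 1 := by field_simp; simp
  have habsjoint : Measurable (fun q : (Fin N → EuclideanSpace ℝ (Fin d)) × ℝ =>
      |Gs q.2 - Gh q.1 q.2|) := ((hGsmeas.comp measurable_snd).sub hGhjoint).abs
  have habsbd : ∀ y s, |Gs s - Gh y s| ≤ 1 := by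
    intro y s
    rw [abs_le]
    constructor
    · have := (hGs01 s).1; have := (hGh01 y s).2; linarith
    · have := (hGs01 s).2; have := (hGh01 y s).1; linarith
  have hW3meas : Measurable (fun z : Ω × (Fin N → EuclideanSpace ℝ (Fin d)) => W3 z.2) := by
    have h1 : StronglyMeasurable (fun q : (Fin N → EuclideanSpace ℝ (Fin d)) × ℝ =>
        |Gs q.2 - Gh q.1 q.2|) := habsjoint.stronglyMeasurable
    have h2 : StronglyMeasurable W3 := by
      rw [hW3]
      exact h1.integral_prod_right'
    exact h2.measurable.comp measurable_snd
  have hW3nn : ∀ y, 0 ≤ W3 y := by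
    intro y
    rw [hW3]
    exact integral_nonneg (fun s => abs_nonneg _)
  have hW3bd : ∀ y, |W3 y| ≤ 1 := by
    intro y
    rw [abs_of_nonneg (hW3nn y)]
    rw [hW3]
    calc ∫ s in Set.Ioc (0:ℝ) 1, |Gs s - Gh y s|
        ≤ ∫ _s in Set.Ioc (0:ℝ) 1, (1:ℝ) := by
          apply integral_mono_of_nonneg (Filter.Eventually.of_forall (fun s => abs_nonneg _))
            (integrable_const 1) (Filter.Eventually.of_forall (fun s => habsbd y s))
      _ = 1 := by simp [Real.volume_Ioc]
  set P : Measure (Ω × (Fin N → EuclideanSpace ℝ (Fin d))) := Pn.prod ν with hP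
  haveI : IsProbabilityMeasure P := by rw [hP]; infer_instance
  have hW1int : Integrable (fun z => W1 z.2) P :=
    aux_bddInt P hW1meas.aestronglyMeasurable (M := 2) hW1bd
  have hW2int : Integrable W2 P :=
    aux_bddInt P hW2meas.aestronglyMeasurable (M := 1) hW2bd
  have hW3int : Integrable (fun z => W3 z.2) P :=
    aux_bddInt P hW3meas.aestronglyMeasurable (M := 1) (fun z => hW3bd z.2)
  have hsumint : Integrable (fun z => (1/p) * (W1 z.2 + 2 * W2 z + W3 z.2)) P :=
    (((hW1int.add (hW2int.const_mul 2)).add hW3int).const_mul (1/p))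
  -- main comparison
  have hstep : ∫ z, |θstar - θhat z| ∂P ≤ ∫ z, (1/p) * (W1 z.2 + 2 * W2 z + W3 z.2) ∂P := by
    apply integral_mono_of_nonneg (Filter.Eventually.of_forall (fun z => abs_nonneg _)) hsumint
    apply Filter.Eventually.of_forall
    intro z
    have hk := key z
    have heq2 : |θstar - θhat z| = (1/p) * (p * |θstar - θhat z|) := by field_simp
    show |θstar - θhat z| ≤ (1/p) * (W1 z.2 + 2 * W2 z + W3 z.2)
    rw [heq2]
    exact mul_le_mul_of_nonneg_left hk (by positivity)
  have hsplit : ∫ z, (1/p) * (W1 z.2 + 2 * W2 z + W3 z.2) ∂P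
      = (1/p) * ((∫ z, W1 z.2 ∂P) + 2 * (∫ z, W2 z ∂P) + ∫ z, W3 z.2 ∂P) := by
    rw [integral_const_mul]
    congr 1
    calc ∫ z, (W1 z.2 + 2 * W2 z + W3 z.2) ∂P
        = (∫ z, (W1 z.2 + 2 * W2 z) ∂P) + ∫ z, W3 z.2 ∂P :=
          integral_add (hW1int.add (hW2int.const_mul 2)) hW3int
      _ = ((∫ z, W1 z.2 ∂P) + ∫ z, 2 * W2 z ∂P) + ∫ z, W3 z.2 ∂P := by
          rw [integral_add hW1int (hW2int.const_mul 2)]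
      _ = (∫ z, W1 z.2 ∂P) + 2 * (∫ z, W2 z ∂P) + ∫ z, W3 z.2 ∂P := by
          rw [integral_const_mul]
  -- E1 : empirical mean of η
  have hmarg1 : ∫ z, W1 z.2 ∂P = ∫ y, W1 y ∂ν := by
    rw [hP]
    rw [integral_prod _ (by rw [← hP]; exact hW1int)]
    simp
  have hE1 : ∫ z, W1 z.2 ∂P ≤ 1/(2*Real.sqrt N) := by
    rw [hmarg1]
    have hmd := aux_meandev μ hη (fun x => (hη01 x).1) (fun x => (hη01 x).2) hN
    rw [← hν] at hmd
    simpa [hW1, hI] using hmd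
  -- E3 : empirical CDF deviation
  have hinner3 : ∀ s : ℝ, ∫ y, |Gs s - Gh y s| ∂ν ≤ 1/(2*Real.sqrt N) := by
    intro s
    have hgmeas : Measurable (fun x : EuclideanSpace ℝ (Fin d) =>
        if s < η x then (1:ℝ) else 0) :=
      Measurable.ite (hη measurableSet_Ioi) measurable_const measurable_const
    have hgint : ∫ x, (if s < η x then (1:ℝ) else 0) ∂μ = Gs s := by
      have hind : (fun x : EuclideanSpace ℝ (Fin d) => if s < η x then (1:ℝ) else 0)
          = Set.indicator {x | s < η x} (fun _ => (1:ℝ)) := by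
        funext x; by_cases hx : s < η x
        · simp [Set.indicator, hx]
        · simp [Set.indicator, hx]
      rw [hind, hGs]
      have hms : MeasurableSet {x : EuclideanSpace ℝ (Fin d) | s < η x} := hη measurableSet_Ioi
      rw [integral_indicator hms, setIntegral_const, smul_eq_mul, mul_one, measureReal_def]
    have hmd := aux_meandev μ hgmeas
      (fun x => by split <;> norm_num) (fun x => by split <;> norm_num) hN
    rw [← hν, hgint] at hmd
    have hcong : ∀ y : Fin N → EuclideanSpace ℝ (Fin d), |Gs s - Gh y s|
        = |(1/(N:ℝ)) * ∑ i : Fin N, (if s < η (y i) then (1:ℝ) else 0) - Gs s| := by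
      intro y
      rw [abs_sub_comm]
    rw [integral_congr_ae (Filter.Eventually.of_forall hcong)]
    exact hmd
  have hswapint : Integrable
      (Function.uncurry fun y s => |Gs s - Gh y s|)
      (ν.prod (volume.restrict (Set.Ioc (0:ℝ) 1))) := by
    refine aux_bddInt _ habsjoint.aestronglyMeasurable (M := 1) (fun q => ?_)
    simp only [Function.uncurry]
    rw [abs_abs]
    exact habsbd q.1 q.2
  have hswap3 : ∫ y, W3 y ∂ν
      = ∫ s in Set.Ioc (0:ℝ) 1, (∫ y, |Gs s - Gh y s| ∂ν) := by
    simp only [hW3]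
    exact integral_integral_swap hswapint
  have hmarg3 : ∫ z, W3 z.2 ∂P = ∫ y, W3 y ∂ν := by
    rw [hP]
    rw [integral_prod _ (by rw [← hP]; exact hW3int)]
    simp
  have hE3 : ∫ z, W3 z.2 ∂P ≤ 1/(2*Real.sqrt N) := by
    rw [hmarg3, hswap3]
    calc ∫ s in Set.Ioc (0:ℝ) 1, (∫ y, |Gs s - Gh y s| ∂ν)
        ≤ ∫ _s in Set.Ioc (0:ℝ) 1, (1/(2*Real.sqrt N)) := by
          apply integral_mono_of_nonneg
          · exact Filter.Eventually.of_forall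
              (fun s => integral_nonneg (fun y => abs_nonneg _))
          · exact integrable_const _
          · exact Filter.Eventually.of_forall (fun s => hinner3 s)
      _ = 1/(2*Real.sqrt N) := by
          rw [setIntegral_const, measureReal_def, Real.volume_Ioc]
          simp
  -- E2 : concentration term
  have hterm2int : ∀ i : Fin N,
      Integrable (fun z : Ω × (Fin N → EuclideanSpace ℝ (Fin d)) =>
        |ηhat z.1 (z.2 i) - η (z.2 i)|) P := by
    intro i
    refine aux_bddInt P (((hηhat_i i).sub (hη_i i)).abs).aestronglyMeasurable
      (M := 1) (fun z => ?_)
    rw [abs_abs, abs_le]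
    constructor
    · have := (hηhat01 z.1 (z.2 i)).1; have := (hη01 (z.2 i)).2; linarith
    · have := (hηhat01 z.1 (z.2 i)).2; have := (hη01 (z.2 i)).1; linarith
  have hsplit2 : ∫ z, W2 z ∂P
      = (1/(N:ℝ)) * ∑ i : Fin N, ∫ z, |ηhat z.1 (z.2 i) - η (z.2 i)| ∂P := by
    simp only [hW2]
    rw [integral_const_mul]
    congr 1
    exact integral_finset_sum _ (fun i _ => hterm2int i)
  have hprodint : Integrable (fun q : Ω × EuclideanSpace ℝ (Fin d) =>
      |ηhat q.1 q.2 - η q.2|) (Pn.prod μ) := by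
    refine aux_bddInt _ ((hηhatm.sub (hη.comp measurable_snd)).abs).aestronglyMeasurable
      (M := 1) (fun q => ?_)
    rw [abs_abs, abs_le]
    constructor
    · have := (hηhat01 q.1 q.2).1; have := (hη01 q.2).2; linarith
    · have := (hηhat01 q.1 q.2).2; have := (hη01 q.2).1; linarith
  have hper : ∀ i : Fin N, ∫ z, |ηhat z.1 (z.2 i) - η (z.2 i)| ∂P
      = ∫ q, |ηhat q.1 q.2 - η q.2| ∂(Pn.prod μ) := by
    intro i
    rw [hP]
    rw [integral_prod _ (by rw [← hP]; exact hterm2int i)]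
    rw [integral_prod _ hprodint]
    apply integral_congr_ae
    apply Filter.Eventually.of_forall
    intro ω
    have := aux_pi_eval μ (fun x => |ηhat ω x - η x|) i
    rw [← hν] at this
    exact this
  have hconcb := aux_conc μ Pn hη hη01 hηhatm hηhat01 hC1 hC2 ha hconc
  have hE2 : ∫ z, W2 z ∂P ≤ C1 * Real.sqrt (Real.pi/(C2*a)) := by
    rw [hsplit2]
    calc (1/(N:ℝ)) * ∑ i : Fin N, ∫ z, |ηhat z.1 (z.2 i) - η (z.2 i)| ∂P
        ≤ (1/(N:ℝ)) * ∑ _i : Fin N, (C1 * Real.sqrt (Real.pi/(C2*a))) := by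
          apply mul_le_mul_of_nonneg_left _ (by positivity)
          apply Finset.sum_le_sum
          intro i _
          rw [hper i]
          exact hconcb
      _ = C1 * Real.sqrt (Real.pi/(C2*a)) := by
          rw [Finset.sum_const]
          simp only [Finset.card_univ, Fintype.card_fin, nsmul_eq_mul]
          field_simp
  -- final arithmetic
  have hra : a ^ (-(1:ℝ)/2) = (Real.sqrt a)⁻¹ := by
    rw [neg_div, Real.rpow_neg ha.le, Real.sqrt_eq_rpow]
  have hrN : (N:ℝ) ^ (-(1:ℝ)/2) = (Real.sqrt N)⁻¹ := by
    rw [neg_div, Real.rpow_neg hNpos.le, Real.sqrt_eq_rpow]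
  have hgauss : C1 * Real.sqrt (Real.pi/(C2*a)) = K * (Real.sqrt a)⁻¹ := by
    rw [hK, Real.sqrt_div Real.pi_pos.le, Real.sqrt_mul hC2.le]
    have h1 : Real.sqrt C2 ≠ 0 := ne_of_gt (Real.sqrt_pos.mpr hC2)
    have h2 : Real.sqrt a ≠ 0 := ne_of_gt hsqrta
    field_simp
  rw [hra, hrN]
  calc ∫ z, |θstar - θhat z| ∂P
      ≤ ∫ z, (1/p) * (W1 z.2 + 2 * W2 z + W3 z.2) ∂P := hstep
    _ = (1/p) * ((∫ z, W1 z.2 ∂P) + 2 * (∫ z, W2 z ∂P) + ∫ z, W3 z.2 ∂P) := hsplit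
    _ ≤ (1/p) * (1/(2*Real.sqrt N) + 2 * (K * (Real.sqrt a)⁻¹) + 1/(2*Real.sqrt N)) := by
        apply mul_le_mul_of_nonneg_left _ (by positivity)
        rw [← hgauss]
        have hW2nn : 0 ≤ ∫ z, W2 z ∂P := by
          apply integral_nonneg
          intro z
          apply mul_nonneg (by positivity)
          exact Finset.sum_nonneg (fun i _ => abs_nonneg _)
        linarith [hE1, hE2, hE3]
    _ = (1/p) * ((Real.sqrt N)⁻¹ + 2 * K * (Real.sqrt a)⁻¹) := by
        congr 1
        have hN0 : Real.sqrt (N:ℝ) ≠ 0 := ne_of_gt hsqrtN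
        field_simp
        ring
    _ ≤ (1 + 2*K)/p * ((Real.sqrt a)⁻¹ + (Real.sqrt N)⁻¹) := by
        have hX : (Real.sqrt N)⁻¹ + 2 * K * (Real.sqrt a)⁻¹
            ≤ (1 + 2*K) * ((Real.sqrt a)⁻¹ + (Real.sqrt N)⁻¹) := by
          have h1 : 0 ≤ (Real.sqrt a)⁻¹ := by positivity
          have h2 : 0 ≤ (Real.sqrt N)⁻¹ := by positivity
          have e : (1 + 2*K) * ((Real.sqrt a)⁻¹ + (Real.sqrt N)⁻¹)
              = (Real.sqrt N)⁻¹ + 2 * K * (Real.sqrt a)⁻¹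
                + ((Real.sqrt a)⁻¹ + 2*K*(Real.sqrt N)⁻¹) := by ring
          rw [e]
          have h4 : 0 ≤ (Real.sqrt a)⁻¹ + 2*K*(Real.sqrt N)⁻¹ := by positivity
          linarith
        calc (1/p) * ((Real.sqrt N)⁻¹ + 2 * K * (Real.sqrt a)⁻¹)
            ≤ (1/p) * ((1 + 2*K) * ((Real.sqrt a)⁻¹ + (Real.sqrt N)⁻¹)) :=
              mul_le_mul_of_nonneg_left hX (by positivity)
          _ = (1 + 2*K)/p * ((Real.sqrt a)⁻¹ + (Real.sqrt N)⁻¹) := by ring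
end
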